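/- arXiv:2308.15021 — 3 statements merged into one kernel-verified Lean document; each statement's English description precedes it below -/
import Mathlib

section
/- Let G be a connected bipartite graph on vertex set {1,…,n} with bipartition (A,B). A vector a ∈ ℕ^n with a ≠ 0 is a solution of the system (*) if and only if both of the following hold: (1) supp(a) is a dominating set of G, and (2) the parallelization G^a is a matching-covered graph. -/
open MvPolynomial

/-! ## Algebraic notions: depth of quotients by homogeneous (monomial) ideals,
and the index of depth stability. -/

/-- The depth of `R/J` (for `R` a polynomial ring): the maximal length of a regular
sequence of homogeneous elements on `R/J`. -/
noncomputable def homDepth {k : Type} [Field k] {n : ℕ}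
    (J : Ideal (MvPolynomial (Fin n) k)) : ℕ :=
  sSup {r | ∃ rs : List (MvPolynomial (Fin n) k), rs.length = r ∧
    (∀ f ∈ rs, ∃ d, MvPolynomial.IsHomogeneous f d) ∧
    RingTheory.Sequence.IsRegular (MvPolynomial (Fin n) k ⧸ J) rs}

/-- The index of depth stability of an ideal `I`: the least `s ≥ 1` such that
`depth R/I^t = depth R/I^s` for all `t ≥ s`. -/
noncomputable def dstab {k : Type} [Field k] {n : ℕ}
    (I : Ideal (MvPolynomial (Fin n) k)) : ℕ :=
  sInf {s | 1 ≤ s ∧ ∀ t, s ≤ t → homDepth (I ^ t) = homDepth (I ^ s)}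

/-- The edge ideal of a graph `G` on vertices `{1,…,n}`: generated by the
monomials `xᵢxⱼ` for the edges `{i,j}` of `G`. -/
noncomputable def edgeIdeal (k : Type) [Field k] {n : ℕ} (G : SimpleGraph (Fin n)) :
    Ideal (MvPolynomial (Fin n) k) :=
  Ideal.span {m | ∃ i j, G.Adj i j ∧ m = X i * X j}

/-! ## Graph-theoretic notions -/

/-- A list of vertices forming an open path (at least one edge, no repeated vertex). -/
def IsOpenPathList {V : Type} (L : List V) : Prop := 2 ≤ L.length ∧ L.Nodup

/-- A list of vertices forming a (proper) cycle: closed, at least 3 edges,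
no repeated vertex except that the first vertex equals the last one. -/
def IsProperCycleList {V : Type} (L : List V) : Prop :=
  4 ≤ L.length ∧ L.head? = L.getLast? ∧ L.dropLast.Nodup

/-- A 2-cycle: an edge `{v,w}` with a specified endpoint `v`, regarded as the
closed walk `v, w, v` of length 2. -/
def IsTwoCycleList {V : Type} (L : List V) : Prop := ∃ v w : V, v ≠ w ∧ L = [v, w, v]

/-- An ear is a path (possibly closed, i.e. a cycle) or a 2-cycle. -/
def IsEarList {V : Type} (L : List V) : Prop :=
  IsOpenPathList L ∨ IsProperCycleList L ∨ IsTwoCycleList L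

/-- An ear which is a cycle (a proper cycle or a 2-cycle). -/
def IsCycleEarList {V : Type} (L : List V) : Prop :=
  IsProperCycleList L ∨ IsTwoCycleList L

/-- The set of edges traversed by an ear, as unordered pairs. -/
def earEdgeSet {V : Type} (L : List V) : Set (Sym2 V) :=
  {e | ∃ p ∈ L.zip L.tail, e = s(p.1, p.2)}

/-- A generalized ear decomposition of a connected graph `G`: a partition of the
edge set of `G` into a sequence of ears `L₁,…,L_r` (paths or 2-cycles) such that
`L₁` is a cycle (possibly a 2-cycle) and each later ear meets the union of the
earlier ones exactly at its endpoints. -/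
structure GenEarDecomp {V : Type} (G : SimpleGraph V) : Type where
  ears : List (List V)
  ears_nonempty : ears ≠ []
  chain_adj : ∀ L ∈ ears, L.Chain' G.Adj
  shape : ∀ L ∈ ears, IsEarList L
  first_cycle : ∀ L ∈ ears.head?, IsCycleEarList L
  attach_ends : ∀ (i : ℕ) (hi : i < ears.length), 1 ≤ i →
      (∀ x ∈ (ears.get ⟨i, hi⟩).head?, x ∈ (ears.take i).flatten) ∧
      (∀ x ∈ (ears.get ⟨i, hi⟩).getLast?, x ∈ (ears.take i).flatten)
  attach_inner : ∀ (i : ℕ) (hi : i < ears.length), 1 ≤ i →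
      ∀ x ∈ (ears.get ⟨i, hi⟩).tail.dropLast, x ∉ (ears.take i).flatten
  edges_disjoint : ∀ (i j : ℕ) (hi : i < ears.length) (hj : j < ears.length), i ≠ j →
      Disjoint (earEdgeSet (ears.get ⟨i, hi⟩)) (earEdgeSet (ears.get ⟨j, hj⟩))
  edges_cover : ∀ e, e ∈ G.edgeSet ↔ ∃ L ∈ ears, e ∈ earEdgeSet L

/-- The number of even ears (ears with an even number of edges; in particular all
2-cycles) of a generalized ear decomposition.  An ear with vertex list `L` has
`L.length - 1` edges, so it is even iff `L.length` is odd. -/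
def evenEarCount {V : Type} {G : SimpleGraph V} (E : GenEarDecomp G) : ℕ :=
  (E.ears.filter (fun L => L.length % 2 == 1)).length

/-- `φ(G)`: the minimal number of even ears in a generalized ear decomposition of `G`. -/
noncomputable def phiGraph {V : Type} (G : SimpleGraph V) : ℕ :=
  sInf {m | ∃ E : GenEarDecomp G, evenEarCount E = m}

/-- `μ(G) = (φ(G) + v(G) - 1)/2` for a connected graph `G`. -/
noncomputable def muGraph {V : Type} (G : SimpleGraph V) : ℕ :=
  (phiGraph G + Nat.card V - 1) / 2

/-- A dominating set: every vertex outside `U` is adjacent to a vertex of `U`. -/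
def IsDominatingSet {V : Type} (G : SimpleGraph V) (U : Set V) : Prop :=
  ∀ v ∉ U, ∃ u ∈ U, G.Adj v u

/-- `(A,B)` is a bipartition of `G`. -/
def IsBipartitionOf {V : Type} (G : SimpleGraph V) (A B : Set V) : Prop :=
  (∀ v, v ∈ A ∨ v ∈ B) ∧ A ∩ B = ∅ ∧
    ∀ ⦃v w⦄, G.Adj v w → ((v ∈ A ∧ w ∈ B) ∨ (v ∈ B ∧ w ∈ A))

/-- `G` is bipartite. -/
def IsBipartiteGraph {V : Type} (G : SimpleGraph V) : Prop :=
  ∃ A B : Set V, IsBipartitionOf G A B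

/-- `G` is a complete bipartite graph. -/
def IsCompleteBipartite {V : Type} (G : SimpleGraph V) : Prop :=
  ∃ A B : Set V, IsBipartitionOf G A B ∧ ∀ a ∈ A, ∀ b ∈ B, G.Adj a b

open Classical in
/-- `s(G)` for a connected bipartite graph `G`: `0` if `G` is complete bipartite,
and otherwise the minimum of `μ(G_U)` over all dominating connected induced
subgraphs `G_U` of `G`. -/
noncomputable def sBip {V : Type} (G : SimpleGraph V) : ℕ :=
  if IsCompleteBipartite G then 0
  else sInf {m | ∃ U : Set V, IsDominatingSet G U ∧ (G.induce U).Connected ∧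
    muGraph (G.induce U) = m}

/-- A graph is strongly nonbipartite if every connected component is nonbipartite. -/
def StronglyNonbipartite {V : Type} (G : SimpleGraph V) : Prop :=
  ∀ c : G.ConnectedComponent, ¬ IsBipartiteGraph (G.induce c.supp)

/-- `φ*(G)` for a (strongly nonbipartite) graph `G`: the minimal total number of even
ears in generalized ear decompositions of the connected components of `G` whose first
ear in each component is an odd cycle. -/
noncomputable def phiStar {V : Type} (G : SimpleGraph V) : ℕ :=
  sInf {m | ∃ D : ∀ c : G.ConnectedComponent, GenEarDecomp (G.induce c.supp),
    (∀ c, ∀ L ∈ (D c).ears.head?, IsProperCycleList L ∧ L.length % 2 = 0) ∧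
    (∑ᶠ c, evenEarCount (D c)) = m}

/-- `μ*(G) = (φ*(G) + v(G) - c)/2` where `c` is the number of connected components. -/
noncomputable def muStar {V : Type} (G : SimpleGraph V) : ℕ :=
  (phiStar G + Nat.card V - Nat.card G.ConnectedComponent) / 2

/-- `s(G)` for a connected nonbipartite graph `G`: the minimum of `μ*(G_U)` over all
dominating strongly nonbipartite induced subgraphs `G_U` of `G`. -/
noncomputable def sNonbip {V : Type} (G : SimpleGraph V) : ℕ :=
  sInf {m | ∃ U : Set V, IsDominatingSet G U ∧ StronglyNonbipartite (G.induce U) ∧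
    muStar (G.induce U) = m}

open Classical in
/-- `s` of a connected component of a graph, according to whether the component
is bipartite or not. -/
noncomputable def sComp {V : Type} (G : SimpleGraph V) (c : G.ConnectedComponent) : ℕ :=
  if IsBipartiteGraph (G.induce c.supp) then sBip (G.induce c.supp)
  else sNonbip (G.induce c.supp)

/-- A vertex cover of `G`. -/
def IsVertexCover {V : Type} (G : SimpleGraph V) (C : Set V) : Prop :=
  ∀ ⦃v w⦄, G.Adj v w → v ∈ C ∨ w ∈ C

/-- A minimal vertex cover of `G`. -/
def IsMinimalVertexCover {V : Type} (G : SimpleGraph V) (C : Set V) : Prop :=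
  IsVertexCover G C ∧ ∀ D ⊆ C, IsVertexCover G D → D = C

/-- `a` is a solution of the system `(*)` associated with the connected bipartite
graph `G` with bipartition `(A,B)`:
`Σ_{i∈A} aᵢ = Σ_{i∈B} aᵢ` and `Σ_{i∈C} aᵢ > Σ_{i∈A} aᵢ` for every minimal vertex
cover `C ≠ A, B` of `G`. -/
def SolvesStar {V : Type} (G : SimpleGraph V) (A B : Set V) (a : V → ℕ) : Prop :=
  (∑ᶠ i ∈ A, a i) = (∑ᶠ i ∈ B, a i) ∧
  ∀ C : Set V, IsMinimalVertexCover G C → C ≠ A → C ≠ B →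
    (∑ᶠ i ∈ A, a i) < (∑ᶠ i ∈ C, a i)

/-- The parallelization `G^a` of `G`: each vertex `i` is replaced by `a i` copies
(`i` is deleted when `a i = 0`), two copies being adjacent iff the original
vertices are adjacent in `G`. -/
def parallelization {V : Type} (G : SimpleGraph V) (a : V → ℕ) :
    SimpleGraph (Σ i : V, Fin (a i)) where
  Adj x y := G.Adj x.1 y.1
  symm := ⟨fun _ _ h => G.adj_symm h⟩
  loopless := ⟨fun x h => G.irrefl h⟩

/-- A connected graph is matching-covered if it is not an isolated vertex and every
edge is contained in a perfect matching. -/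
def IsMatchingCovered {W : Type} (H : SimpleGraph W) : Prop :=
  H.Connected ∧ H.edgeSet.Nonempty ∧
    ∀ e ∈ H.edgeSet, ∃ M : H.Subgraph, M.IsPerfectMatching ∧ e ∈ M.edgeSet

/-- An independent set of `G`. -/
def IsIndependentSet {V : Type} (G : SimpleGraph V) (F : Set V) : Prop :=
  ∀ ⦃v⦄, v ∈ F → ∀ ⦃w⦄, w ∈ F → ¬ G.Adj v w

/-- A maximal independent set of `G`. -/
def IsMaxIndependentSet {V : Type} (G : SimpleGraph V) (F : Set V) : Prop :=
  IsIndependentSet G F ∧ ∀ F', IsIndependentSet G F' → F ⊆ F' → F' = F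

/-- The number of leaves (vertices of degree 1) of `G`. -/
noncomputable def leafCount {V : Type} (G : SimpleGraph V) : ℕ :=
  {v : V | (G.neighborSet v).ncard = 1}.ncard

/-! ## Auxiliary development for the main theorem -/

section Aux

variable {n : ℕ}

noncomputable def wtf (a : Fin n → ℕ) (S : Set (Fin n)) : ℕ := ∑ i, S.indicator a i

lemma wtf_le {a : Fin n → ℕ} {S T : Set (Fin n)} (h : ∀ i ∈ S, a i ≠ 0 → i ∈ T) :
    wtf a S ≤ wtf a T := by
  classical
  refine Finset.sum_le_sum fun i _ => ?_
  by_cases hiS : i ∈ S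
  · by_cases hz : a i = 0
    · simp [Set.indicator_apply, hiS, hz]
    · simp [Set.indicator_apply, hiS, h i hiS hz]
  · simp [Set.indicator_apply, hiS]

lemma wtf_mono {a : Fin n → ℕ} {S T : Set (Fin n)} (h : S ⊆ T) : wtf a S ≤ wtf a T :=
  wtf_le fun i hi _ => h hi

lemma wtf_union_le {a : Fin n → ℕ} (S T : Set (Fin n)) :
    wtf a (S ∪ T) ≤ wtf a S + wtf a T := by
  classical
  rw [wtf, wtf, wtf, ← Finset.sum_add_distrib]
  refine Finset.sum_le_sum fun i _ => ?_
  by_cases hiS : i ∈ S <;> by_cases hiT : i ∈ T <;>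
    simp [Set.indicator_apply, hiS, hiT]

lemma wtf_union_disjoint {a : Fin n → ℕ} {S T : Set (Fin n)} (h : ∀ i ∈ S, i ∉ T) :
    wtf a (S ∪ T) = wtf a S + wtf a T := by
  classical
  rw [wtf, wtf, wtf, ← Finset.sum_add_distrib]
  refine Finset.sum_congr rfl fun i _ => ?_
  by_cases hiS : i ∈ S
  · simp [Set.indicator_apply, hiS, h i hiS]
  · by_cases hiT : i ∈ T <;> simp [Set.indicator_apply, hiS, hiT]

lemma wtf_inter_add_diff {a : Fin n → ℕ} (S T : Set (Fin n)) :
    wtf a (S ∩ T) + wtf a (S \ T) = wtf a S := by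
  classical
  rw [wtf, wtf, wtf, ← Finset.sum_add_distrib]
  refine Finset.sum_congr rfl fun i _ => ?_
  by_cases hiS : i ∈ S <;> by_cases hiT : i ∈ T <;>
    simp [Set.indicator_apply, hiS, hiT]

lemma wtf_eq_zero {a : Fin n → ℕ} {S : Set (Fin n)} :
    wtf a S = 0 ↔ ∀ i ∈ S, a i = 0 := by
  classical
  rw [wtf, Finset.sum_eq_zero_iff]
  constructor
  · intro h i hi
    have := h i (Finset.mem_univ i)
    simpa [Set.indicator_apply, hi] using this
  · intro h i _
    by_cases hi : i ∈ S
    · simp [Set.indicator_apply, hi, h i hi]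
    · simp [Set.indicator_apply, hi]

lemma le_wtf {a : Fin n → ℕ} {S : Set (Fin n)} {i : Fin n} (hi : i ∈ S) :
    a i ≤ wtf a S := by
  classical
  have := Finset.single_le_sum (f := S.indicator a) (fun j _ => Nat.zero_le _)
    (Finset.mem_univ i)
  simpa [wtf, Set.indicator_apply, hi] using this

lemma wtf_singleton {a : Fin n → ℕ} (i : Fin n) : wtf a {i} = a i := by
  classical
  rw [wtf]
  rw [Finset.sum_eq_single i]
  · simp [Set.indicator_apply]
  · intro j _ hj
    simp [Set.indicator_apply, hj]
  · intro h
    exact absurd (Finset.mem_univ i) h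

lemma finsum_mem_eq_wtf (a : Fin n → ℕ) (S : Set (Fin n)) :
    (∑ᶠ i ∈ S, a i) = wtf a S := by
  rw [finsum_mem_def, finsum_eq_sum_of_fintype, wtf]

open Classical in
noncomputable def cop (a : Fin n → ℕ) (S : Set (Fin n)) : Finset (Σ i, Fin (a i)) :=
  Finset.univ.filter (fun z => z.1 ∈ S)

lemma mem_cop {a : Fin n → ℕ} {S : Set (Fin n)} {z : Σ i, Fin (a i)} :
    z ∈ cop a S ↔ z.1 ∈ S := by
  classical
  simp [cop]

lemma card_cop (a : Fin n → ℕ) (S : Set (Fin n)) : (cop a S).card = wtf a S := by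
  classical
  have h : cop a S
      = (Finset.univ.filter (· ∈ S)).sigma (fun i => (Finset.univ : Finset (Fin (a i)))) := by
    ext z
    simp [mem_cop, Finset.mem_sigma]
  rw [h, Finset.card_sigma, Finset.sum_filter, wtf]
  refine Finset.sum_congr rfl fun i _ => ?_
  by_cases hi : i ∈ S <;> simp [Set.indicator_apply, hi]

variable {G : SimpleGraph (Fin n)} {A B : Set (Fin n)} {a : Fin n → ℕ}

lemma bip_symm (h : IsBipartitionOf G A B) : IsBipartitionOf G B A :=
  ⟨fun v => (h.1 v).symm, by rw [Set.inter_comm]; exact h.2.1,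
    fun v w hvw => (h.2.2 hvw).symm⟩

lemma not_mem_A (h : IsBipartitionOf G A B) {v : Fin n} (hv : v ∈ B) : v ∉ A := by
  intro hA
  have hx : v ∈ A ∩ B := ⟨hA, hv⟩
  rw [h.2.1] at hx
  exact hx

lemma mem_B_of_not_A (h : IsBipartitionOf G A B) {v : Fin n} (hv : v ∉ A) : v ∈ B :=
  (h.1 v).resolve_left hv

lemma adj_sideB (h : IsBipartitionOf G A B) {v w : Fin n} (hvw : G.Adj v w) (hv : v ∈ A) :
    w ∈ B := by
  rcases h.2.2 hvw with ⟨_, hw⟩ | ⟨hv', _⟩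
  · exact hw
  · exact absurd hv (not_mem_A h hv')

lemma cover_left (h : IsBipartitionOf G A B) : IsVertexCover G A :=
  fun _ _ hvw => (h.2.2 hvw).elim (fun p => Or.inl p.1) (fun p => Or.inr p.2)

lemma exists_min_cover (C₀ : Set (Fin n)) (h : IsVertexCover G C₀) :
    ∃ C, C ⊆ C₀ ∧ IsMinimalVertexCover G C := by
  classical
  set s : Finset (Finset (Fin n)) :=
    Finset.univ.filter (fun D => (↑D ⊆ C₀) ∧ IsVertexCover G (↑D : Set (Fin n))) with hs
  have hC₀ : (Set.toFinite C₀).toFinset ∈ s := by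
    simp only [hs, Finset.mem_filter, Finset.mem_univ, true_and, Set.Finite.coe_toFinset]
    exact ⟨subset_rfl, h⟩
  obtain ⟨D, hD, hmin⟩ := Finset.exists_min_image s Finset.card ⟨_, hC₀⟩
  simp only [hs, Finset.mem_filter, Finset.mem_univ, true_and] at hD
  refine ⟨↑D, hD.1, hD.2, ?_⟩
  intro E hE hcov
  have hE' : (Set.toFinite E).toFinset ∈ s := by
    simp only [hs, Finset.mem_filter, Finset.mem_univ, true_and, Set.Finite.coe_toFinset]
    exact ⟨hE.trans hD.1, hcov⟩
  have hcard := hmin _ hE'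
  have hsub : (Set.toFinite E).toFinset ⊆ D := by
    intro x hx
    rw [Set.Finite.mem_toFinset] at hx
    exact_mod_cast hE hx
  have heq : (Set.toFinite E).toFinset = D := Finset.eq_of_subset_of_card_le hsub hcard
  calc E = ↑(Set.toFinite E).toFinset := (Set.Finite.coe_toFinset _).symm
  _ = ↑D := by rw [heq]

lemma key_lemma (hbip : IsBipartitionOf G A B) (hs : SolvesStar G A B a)
    {C₀ : Set (Fin n)} (hcov : IsVertexCover G C₀) (hA : ¬ A ⊆ C₀) (hB : ¬ B ⊆ C₀) :
    wtf a A < wtf a C₀ := by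
  obtain ⟨C, hCsub, hCmin⟩ := exists_min_cover C₀ hcov
  have h1 : C ≠ A := fun h => hA (h ▸ hCsub)
  have h2 : C ≠ B := fun h => hB (h ▸ hCsub)
  have h3 := hs.2 C hCmin h1 h2
  rw [finsum_mem_eq_wtf, finsum_mem_eq_wtf] at h3
  exact h3.trans_le (wtf_mono hCsub)

lemma solves_symm (hs : SolvesStar G A B a) : SolvesStar G B A a := by
  refine ⟨hs.1.symm, fun C hC h1 h2 => ?_⟩
  rw [← hs.1]
  exact hs.2 C hC h2 h1

lemma wtfA_eq_wtfB (hs : SolvesStar G A B a) : wtf a A = wtf a B := by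
  have := hs.1
  rwa [finsum_mem_eq_wtf, finsum_mem_eq_wtf] at this

def nbhd (G : SimpleGraph (Fin n)) (S : Set (Fin n)) : Set (Fin n) :=
  {j | ∃ i ∈ S, G.Adj i j}

lemma nbhd_subset (hbip : IsBipartitionOf G A B) {S : Set (Fin n)} (hS : S ⊆ A) :
    nbhd G S ⊆ B := by
  rintro j ⟨i, hiS, hadj⟩
  exact adj_sideB hbip hadj (hS hiS)

lemma a_eq_zero_all (hbip : IsBipartitionOf G A B) (hA : wtf a A = 0) (hB : wtf a B = 0) :
    a = 0 := by
  funext i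
  rcases hbip.1 i with h | h
  · exact wtf_eq_zero.mp hA i h
  · exact wtf_eq_zero.mp hB i h

/-- Every vertex has a neighbour in the support. -/
lemma F1aux (hbip : IsBipartitionOf G A B) (hs : SolvesStar G A B a) (ha : a ≠ 0)
    {v : Fin n} (hv : v ∈ A) : ∃ u, G.Adj v u ∧ a u ≠ 0 := by
  by_contra hno
  push_neg at hno
  set C₀ : Set (Fin n) := (A \ {v}) ∪ {u | G.Adj v u} with hC₀
  have hcov : IsVertexCover G C₀ := by
    intro x y hxy
    rcases hbip.2.2 hxy with ⟨hx, _⟩ | ⟨_, hy⟩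
    · by_cases hxv : x = v
      · exact Or.inr (Or.inr (hxv ▸ hxy))
      · exact Or.inl (Or.inl ⟨hx, hxv⟩)
    · by_cases hyv : y = v
      · exact Or.inl (Or.inr (hyv ▸ hxy.symm))
      · exact Or.inr (Or.inl ⟨hy, hyv⟩)
  have hAn : ¬ A ⊆ C₀ := by
    intro hsub
    rcases hsub hv with h | h
    · exact h.2 rfl
    · exact G.irrefl h
  have hBn : ¬ B ⊆ C₀ := by
    intro hsub
    have hB0 : wtf a B = 0 := by
      rw [wtf_eq_zero]
      intro b hb
      rcases hsub hb with h | h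
      · exact absurd h.1 (not_mem_A hbip hb)
      · exact hno b h
    have hA0 : wtf a A = 0 := (wtfA_eq_wtfB hs).trans hB0
    exact ha (a_eq_zero_all hbip hA0 hB0)
  have hk := key_lemma hbip hs hcov hAn hBn
  have hle : wtf a C₀ ≤ wtf a A := by
    refine wtf_le fun i hi hia => ?_
    rcases hi with h | h
    · exact h.1
    · exact absurd (hno i h) hia
  omega

lemma F1 (hbip : IsBipartitionOf G A B) (hs : SolvesStar G A B a) (ha : a ≠ 0)
    (v : Fin n) : ∃ u, G.Adj v u ∧ a u ≠ 0 := by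
  rcases hbip.1 v with h | h
  · exact F1aux hbip hs ha h
  · exact F1aux (bip_symm hbip) (solves_symm hs) ha h

/-- Surplus lemma: strict Hall condition from the system `(*)`. -/
lemma F2 (hbip : IsBipartitionOf G A B) (hs : SolvesStar G A B a)
    {S : Set (Fin n)} (hSA : S ⊆ A) (hSne : S.Nonempty)
    {t : Fin n} (ht : t ∈ A) (htS : t ∉ S) (hta : a t ≠ 0) :
    wtf a S + 1 ≤ wtf a (nbhd G S) := by
  set C₀ : Set (Fin n) := (A \ S) ∪ nbhd G S with hC₀
  have hcov : IsVertexCover G C₀ := by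
    intro x y hxy
    rcases hbip.2.2 hxy with ⟨hx, _⟩ | ⟨_, hy⟩
    · by_cases hxS : x ∈ S
      · exact Or.inr (Or.inr ⟨x, hxS, hxy⟩)
      · exact Or.inl (Or.inl ⟨hx, hxS⟩)
    · by_cases hyS : y ∈ S
      · exact Or.inl (Or.inr ⟨y, hyS, hxy.symm⟩)
      · exact Or.inr (Or.inl ⟨hy, hyS⟩)
  have hSeq : A ∩ S = S := Set.inter_eq_self_of_subset_right hSA
  have hsum : wtf a S + wtf a (A \ S) = wtf a A := by
    have := wtf_inter_add_diff (a := a) A S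
    rwa [hSeq] at this
  by_cases hBC : B ⊆ C₀
  · have hBN : B ⊆ nbhd G S := by
      intro b hb
      rcases hBC hb with h | h
      · exact absurd h.1 (not_mem_A hbip hb)
      · exact h
    have h1 : wtf a B ≤ wtf a (nbhd G S) := wtf_mono hBN
    have h2 : wtf a A = wtf a B := wtfA_eq_wtfB hs
    have h3 : a t ≤ wtf a (A \ S) := le_wtf ⟨ht, htS⟩
    omega
  · have hAC : ¬ A ⊆ C₀ := by
      intro hsub
      obtain ⟨s₀, hs₀⟩ := hSne
      rcases hsub (hSA hs₀) with h | h
      · exact h.2 hs₀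
      · exact not_mem_A hbip (nbhd_subset hbip hSA h) (hSA hs₀)
    have hk := key_lemma hbip hs hcov hAC hBC
    have hle := wtf_union_le (a := a) (A \ S) (nbhd G S)
    rw [hC₀] at hk
    omega

/-- The connectivity auxiliary lemma. -/
lemma conn_aux (hbip : IsBipartitionOf G A B) (hs : SolvesStar G A B a) (ha : a ≠ 0)
    {U : Set (Fin n)} (hUsupp : ∀ i ∈ U, a i ≠ 0)
    (hclosed : ∀ i ∈ U, ∀ j, G.Adj i j → a j ≠ 0 → j ∈ U)
    (hUne : U.Nonempty) (hW : ∃ w, a w ≠ 0 ∧ w ∉ U)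
    (hwle : wtf a (U ∩ B) ≤ wtf a (U ∩ A)) : False := by
  -- U ∩ A is nonempty
  have hUA : (U ∩ A).Nonempty := by
    obtain ⟨u₀, hu₀⟩ := hUne
    obtain ⟨u₁, hadj, ha₁⟩ := F1 hbip hs ha u₀
    have hu₁ : u₁ ∈ U := hclosed u₀ hu₀ u₁ hadj ha₁
    rcases hbip.1 u₀ with h | h
    · exact ⟨u₀, hu₀, h⟩
    · exact ⟨u₁, hu₁, adj_sideB (bip_symm hbip) hadj h⟩
  set C₀ : Set (Fin n) :=
    (A \ (U ∩ A)) ∪ (U ∩ B) ∪ {j | (∃ i ∈ U ∩ A, G.Adj i j) ∧ a j = 0} with hC₀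
  have hcov : IsVertexCover G C₀ := by
    intro x y hxy
    rcases hbip.2.2 hxy with ⟨hx, hy⟩ | ⟨hx, hy⟩
    · by_cases hxU : x ∈ U
      · by_cases hya : a y = 0
        · exact Or.inr (Or.inr ⟨⟨x, ⟨hxU, hx⟩, hxy⟩, hya⟩)
        · exact Or.inr (Or.inl (Or.inr ⟨hclosed x hxU y hxy hya, hy⟩))
      · exact Or.inl (Or.inl (Or.inl ⟨hx, fun hc => hxU hc.1⟩))
    · by_cases hyU : y ∈ U
      · by_cases hxa : a x = 0
        · exact Or.inl (Or.inr ⟨⟨y, ⟨hyU, hy⟩, hxy.symm⟩, hxa⟩)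
        · exact Or.inl (Or.inl (Or.inr ⟨hclosed y hyU x hxy.symm hxa, hx⟩))
      · exact Or.inr (Or.inl (Or.inl ⟨hy, fun hc => hyU hc.1⟩))
  have hAn : ¬ A ⊆ C₀ := by
    intro hsub
    obtain ⟨u, huU, huA⟩ := hUA
    rcases hsub huA with (h | h) | h
    · exact h.2 ⟨huU, huA⟩
    · exact not_mem_A hbip h.2 huA
    · exact hUsupp u huU h.2
  have hBn : ¬ B ⊆ C₀ := by
    intro hsub
    obtain ⟨w, hwa, hwU⟩ := hW
    obtain ⟨w', hadj, hw'a⟩ := F1 hbip hs ha w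
    have hw'U : w' ∉ U := fun hc => hwU (hclosed w' hc w hadj.symm hwa)
    -- pick whichever of w, w' lies in B
    have hpick : ∃ b, b ∈ B ∧ a b ≠ 0 ∧ b ∉ U := by
      rcases hbip.1 w with h | h
      · exact ⟨w', adj_sideB hbip hadj h, hw'a, hw'U⟩
      · exact ⟨w, h, hwa, hwU⟩
    obtain ⟨b, hbB, hba, hbU⟩ := hpick
    rcases hsub hbB with (h | h) | h
    · exact not_mem_A hbip hbB h.1
    · exact hbU h.1
    · exact hba h.2
  have hk := key_lemma hbip hs hcov hAn hBn
  have h1 : wtf a C₀ ≤ wtf a ((A \ (U ∩ A)) ∪ (U ∩ B)) := by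
    refine wtf_le fun i hi hia => ?_
    rcases hi with (h | h) | h
    · exact Or.inl h
    · exact Or.inr h
    · exact absurd h.2 hia
  have h2 := wtf_union_le (a := a) (A \ (U ∩ A)) (U ∩ B)
  have h3 : wtf a (U ∩ A) + wtf a (A \ (U ∩ A)) = wtf a A := by
    have := wtf_inter_add_diff (a := a) A (U ∩ A)
    rwa [Set.inter_eq_self_of_subset_right Set.inter_subset_right] at this
  omega

lemma parallelization_adj {V : Type} (G : SimpleGraph V) (a : V → ℕ)
    {x y : Σ i : V, Fin (a i)} : (parallelization G a).Adj x y ↔ G.Adj x.1 y.1 :=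
  Iff.rfl

lemma walk_closed {W : Type} {H : SimpleGraph W} {P : Set W}
    (hP : ∀ ⦃u v⦄, u ∈ P → H.Adj u v → v ∈ P) :
    ∀ {x y : W}, H.Walk x y → x ∈ P → y ∈ P
  | _, _, SimpleGraph.Walk.nil, hx => hx
  | _, _, SimpleGraph.Walk.cons h q, hx => walk_closed hP q (hP hx h)

/-- The parallelization is preconnected. -/
lemma H_preconnected (hbip : IsBipartitionOf G A B) (hs : SolvesStar G A B a)
    (ha : a ≠ 0) : (parallelization G a).Preconnected := by
  classical
  obtain ⟨i₀, hi₀⟩ : ∃ i, a i ≠ 0 := Function.ne_iff.mp ha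
  set H := parallelization G a with hH
  set x₀ : Σ i, Fin (a i) := ⟨i₀, ⟨0, Nat.pos_of_ne_zero hi₀⟩⟩ with hx₀
  set S : Set (Fin n) := {i | a i ≠ 0 ∧ ∀ r : Fin (a i), H.Reachable x₀ ⟨i, r⟩} with hS
  have hSsupp : ∀ i ∈ S, a i ≠ 0 := fun i h => h.1
  have hclosed : ∀ i ∈ S, ∀ j, G.Adj i j → a j ≠ 0 → j ∈ S := by
    intro i hi j hadj haj
    refine ⟨haj, fun r => ?_⟩
    exact (hi.2 ⟨0, Nat.pos_of_ne_zero hi.1⟩).trans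
      (SimpleGraph.Adj.reachable (show H.Adj ⟨i, _⟩ ⟨j, r⟩ from hadj))
  have hx₀S : i₀ ∈ S := by
    refine ⟨hi₀, fun r => ?_⟩
    obtain ⟨u, hadj, hu⟩ := F1 hbip hs ha i₀
    exact (SimpleGraph.Adj.reachable
        (show H.Adj x₀ ⟨u, ⟨0, Nat.pos_of_ne_zero hu⟩⟩ from hadj)).trans
      (SimpleGraph.Adj.reachable
        (show H.Adj ⟨u, ⟨0, Nat.pos_of_ne_zero hu⟩⟩ ⟨i₀, r⟩ from hadj.symm))
  have hall : ∀ i, a i ≠ 0 → i ∈ S := by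
    by_contra hno
    push_neg at hno
    obtain ⟨w, hw, hwS⟩ := hno
    rcases le_total (wtf a (S ∩ B)) (wtf a (S ∩ A)) with h | h
    · exact conn_aux hbip hs ha hSsupp hclosed ⟨i₀, hx₀S⟩ ⟨w, hw, hwS⟩ h
    · exact conn_aux (bip_symm hbip) (solves_symm hs) ha hSsupp hclosed
        ⟨i₀, hx₀S⟩ ⟨w, hw, hwS⟩ h
  intro x y
  have hx : H.Reachable x₀ ⟨x.1, x.2⟩ := (hall x.1 (Nat.pos_iff_ne_zero.mp x.2.pos)).2 x.2
  have hy : H.Reachable x₀ ⟨y.1, y.2⟩ := (hall y.1 (Nat.pos_iff_ne_zero.mp y.2.pos)).2 y.2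
  rw [Sigma.eta] at hx hy
  exact hx.symm.trans hy

/-- Partner function of a perfect matching. -/
lemma pm_partner {W : Type} {H : SimpleGraph W} {M : H.Subgraph}
    (hM : M.IsPerfectMatching) :
    ∃ g : W → W, (∀ v, M.Adj v (g v)) ∧ (∀ v w, M.Adj v w → g v = w) := by
  have hM' := (SimpleGraph.Subgraph.isPerfectMatching_iff).mp hM
  refine ⟨fun v => (hM' v).choose, fun v => (hM' v).choose_spec.1, fun v w h => ?_⟩
  exact ((hM' v).choose_spec.2 w h).symm

end Aux


section Aux2

variable {n : ℕ} {G : SimpleGraph (Fin n)} {A B : Set (Fin n)} {a : Fin n → ℕ}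

/-- From matching-coveredness: cardinalities of the two sides agree. -/
lemma B0 (hbip : IsBipartitionOf G A B)
    (hmc : IsMatchingCovered (parallelization G a)) : wtf a A = wtf a B := by
  classical
  obtain ⟨e, he⟩ := hmc.2.1
  obtain ⟨M, hM, _⟩ := hmc.2.2 e he
  obtain ⟨g, hg, hguniq⟩ := pm_partner hM
  have ginv : ∀ v, g (g v) = v := fun v => hguniq (g v) v (hg v).symm
  have ginj : Function.Injective g := Function.LeftInverse.injective ginv
  have hside : ∀ {S T : Set (Fin n)}, IsBipartitionOf G S T →
      (cop a S).card ≤ (cop a T).card := by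
    intro S T hb
    refine Finset.card_le_card_of_injOn g (fun z hz => ?_) ginj.injOn
    rw [Finset.mem_coe, mem_cop] at hz ⊢
    exact adj_sideB hb (M.adj_sub (hg z)) hz
  rw [← card_cop, ← card_cop]
  exact le_antisymm (hside hbip) (hside (bip_symm hbip))

/-- From matching-coveredness: every support vertex has a support neighbour. -/
lemma B1 (hmc : IsMatchingCovered (parallelization G a)) {v : Fin n} (hv : a v ≠ 0) :
    ∃ u, G.Adj v u ∧ a u ≠ 0 := by
  obtain ⟨e, he⟩ := hmc.2.1
  obtain ⟨M, hM, _⟩ := hmc.2.2 e he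
  obtain ⟨g, hg, _⟩ := pm_partner hM
  set z : Σ i, Fin (a i) := ⟨v, ⟨0, Nat.pos_of_ne_zero hv⟩⟩ with hz
  exact ⟨(g z).1, M.adj_sub (hg z), Nat.pos_iff_ne_zero.mp (g z).2.pos⟩

/-- Strict Hall condition from matching-coveredness. -/
lemma B2 (hbip : IsBipartitionOf G A B)
    (hmc : IsMatchingCovered (parallelization G a))
    {T : Set (Fin n)} (hTA : T ⊆ A) (hTsupp : ∀ t ∈ T, a t ≠ 0)
    (hTne : T.Nonempty) {u : Fin n} (huA : u ∈ A) (hu : a u ≠ 0) (huT : u ∉ T) :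
    wtf a T + 1 ≤ wtf a (nbhd G T) := by
  classical
  set H := parallelization G a with hH
  have hedge : ∃ p q : Σ i, Fin (a i), H.Adj p q ∧ q.1 ∈ nbhd G T ∧ p.1 ∉ T := by
    by_contra hno
    push_neg at hno
    set P : Set (Σ i, Fin (a i)) := {z | z.1 ∈ T ∨ z.1 ∈ nbhd G T} with hP
    have hstep : ∀ ⦃p q : Σ i, Fin (a i)⦄, p ∈ P → H.Adj p q → q ∈ P := by
      intro p q hp hadj
      rcases hp with h | h
      · exact Or.inr ⟨p.1, h, hadj⟩
      · exact Or.inl (hno q p hadj.symm h)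
    obtain ⟨t, ht⟩ := hTne
    have hr : H.Reachable ⟨t, ⟨0, Nat.pos_of_ne_zero (hTsupp t ht)⟩⟩
        ⟨u, ⟨0, Nat.pos_of_ne_zero hu⟩⟩ := hmc.1.preconnected _ _
    have hmem : (⟨u, ⟨0, Nat.pos_of_ne_zero hu⟩⟩ : Σ i, Fin (a i)) ∈ P :=
      hr.elim fun w => walk_closed hstep w (Or.inl ht)
    rcases hmem with h | h
    · exact huT h
    · exact not_mem_A hbip (nbhd_subset hbip hTA h) huA
  obtain ⟨p, q, hpq, hqN, hpT⟩ := hedge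
  obtain ⟨M, hM, heM⟩ := hmc.2.2 s(p, q) hpq
  obtain ⟨g, hg, hguniq⟩ := pm_partner hM
  have ginv : ∀ v, g (g v) = v := fun v => hguniq (g v) v (hg v).symm
  have ginj : Function.Injective g := Function.LeftInverse.injective ginv
  have hMpq : M.Adj p q := (SimpleGraph.Subgraph.mem_edgeSet).mp heM
  have hmaps : ∀ z ∈ cop a T, g z ∈ (cop a (nbhd G T)).erase q := by
    intro z hz
    rw [mem_cop] at hz
    have hadj : H.Adj z (g z) := M.adj_sub (hg z)
    refine Finset.mem_erase.mpr ⟨?_, mem_cop.mpr ⟨z.1, hz, hadj⟩⟩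
    intro hgq
    have hgqz : g q = z := by rw [← hgq, ginv]
    have : p = z := (hguniq q p hMpq.symm).symm.trans hgqz
    exact hpT (this ▸ hz)
  have hcard := Finset.card_le_card_of_injOn g hmaps ginj.injOn
  have hqmem : q ∈ cop a (nbhd G T) := mem_cop.mpr hqN
  rw [Finset.card_erase_of_mem hqmem, card_cop, card_cop] at hcard
  have h1 : a q.1 ≤ wtf a (nbhd G T) := le_wtf hqN
  have h2 : a q.1 ≠ 0 := Nat.pos_iff_ne_zero.mp q.2.pos
  omega

/-- The minimal-vertex-cover inequality from the graph-theoretic conditions. -/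
lemma B3 (hbip : IsBipartitionOf G A B) (hdom : IsDominatingSet G {i | a i ≠ 0})
    (hmc : IsMatchingCovered (parallelization G a))
    {C : Set (Fin n)} (hC : IsMinimalVertexCover G C) (hCA : C ≠ A) (hCB : C ≠ B) :
    wtf a A < wtf a C := by
  classical
  have hAnC : ∃ v ∈ A, v ∉ C := by
    by_contra h
    push_neg at h
    exact hCA ((hC.2 A h (cover_left hbip)).symm)
  set T : Set (Fin n) := (A \ C) ∩ {i | a i ≠ 0} with hT
  by_cases hTne : T.Nonempty
  · by_cases hACsupp : ∃ u, u ∈ C ∧ u ∈ A ∧ a u ≠ 0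
    · obtain ⟨u, huC, huA, hua⟩ := hACsupp
      have hTA : T ⊆ A := fun i hi => hi.1.1
      have hB2 := B2 hbip hmc hTA (fun t ht => ht.2) hTne huA hua (fun h => h.1.2 huC)
      have hNTC : nbhd G T ⊆ C := by
        rintro j ⟨i, hiT, hadj⟩
        exact (hC.1 hadj).resolve_left hiT.1.2
      have hNTB : nbhd G T ⊆ B := nbhd_subset hbip hTA
      have hsub : (C ∩ A) ∪ nbhd G T ⊆ C :=
        Set.union_subset Set.inter_subset_left hNTC
      have hdj : ∀ i ∈ C ∩ A, i ∉ nbhd G T := fun i hi hN =>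
        not_mem_A hbip (hNTB hN) hi.2
      have h1 : wtf a (C ∩ A) + wtf a (nbhd G T) ≤ wtf a C := by
        rw [← wtf_union_disjoint hdj]
        exact wtf_mono hsub
      have h2 : wtf a (A ∩ C) + wtf a (A \ C) = wtf a A := wtf_inter_add_diff A C
      have h3 : wtf a (A \ C) ≤ wtf a T := wtf_le fun i hi hia => ⟨hi, hia⟩
      have h4 : wtf a T ≤ wtf a (A \ C) := wtf_mono Set.inter_subset_left
      have h5 : wtf a (A ∩ C) = wtf a (C ∩ A) := by rw [Set.inter_comm]
      omega
    · push_neg at hACsupp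
      have hBC : B ⊆ C := by
        intro b hb
        by_contra hbC
        have hwex : ∃ w, G.Adj b w ∧ a w ≠ 0 := by
          by_cases hbsupp : a b ≠ 0
          · exact B1 hmc hbsupp
          · push_neg at hbsupp
            obtain ⟨w, hw, hadj⟩ := hdom b (by simpa using hbsupp)
            exact ⟨w, hadj, hw⟩
        obtain ⟨w, hwadj, hwa⟩ := hwex
        have hwA : w ∈ A := adj_sideB (bip_symm hbip) hwadj hb
        have hwC : w ∈ C := (hC.1 hwadj).resolve_left hbC
        exact hwa (hACsupp w hwC hwA)
      exact absurd (hC.2 B hBC (cover_left (bip_symm hbip))) (fun h => hCB h.symm)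
  · obtain ⟨v, hvA, hvC⟩ := hAnC
    have hvns : a v = 0 := by
      by_contra hva
      exact hTne ⟨v, ⟨hvA, hvC⟩, hva⟩
    obtain ⟨u, hu, hadj⟩ := hdom v (by simpa using hvns)
    have huC : u ∈ C := (hC.1 hadj).resolve_left hvC
    have huB : u ∈ B := adj_sideB hbip hadj hvA
    have h2 : wtf a (A ∩ C) + wtf a (A \ C) = wtf a A := wtf_inter_add_diff A C
    have h3 : wtf a (A \ C) = 0 := by
      rw [wtf_eq_zero]
      intro i hi
      by_contra hia
      exact hTne ⟨i, hi, hia⟩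
    have h4 : wtf a ((A ∩ C) ∪ {u}) ≤ wtf a C := by
      refine wtf_mono (Set.union_subset Set.inter_subset_right ?_)
      simpa using huC
    have h5 : wtf a ((A ∩ C) ∪ {u}) = wtf a (A ∩ C) + a u := by
      rw [wtf_union_disjoint, wtf_singleton]
      intro i hi hiu
      rw [Set.mem_singleton_iff] at hiu
      exact not_mem_A hbip huB (hiu ▸ hi.1)
    have h6 : a u ≠ 0 := hu
    omega

end Aux2


section Aux3

variable {n : ℕ} {G : SimpleGraph (Fin n)} {A B : Set (Fin n)} {a : Fin n → ℕ}

/-- Every edge of the parallelization lies in a perfect matching. -/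
lemma F4 (hbip : IsBipartitionOf G A B) (hs : SolvesStar G A B a) (ha : a ≠ 0)
    {x y : Σ i, Fin (a i)} (hxy : (parallelization G a).Adj x y) (hxA : x.1 ∈ A) :
    ∃ M : (parallelization G a).Subgraph, M.IsPerfectMatching ∧ s(x, y) ∈ M.edgeSet := by
  classical
  set H := parallelization G a with hH
  have hxy' : G.Adj x.1 y.1 := hxy
  have hyB : y.1 ∈ B := adj_sideB hbip hxy' hxA
  set α := {z : Σ i, Fin (a i) // z.1 ∈ A ∧ z ≠ x} with hα
  set r : α → Finset (Σ i, Fin (a i)) :=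
    fun z => ((cop a B).erase y).filter (fun w => H.Adj z.val w) with hr
  have hall : ∀ F : Finset α, F.card ≤ (F.biUnion r).card := by
    intro F
    rcases F.eq_empty_or_nonempty with rfl | hFne
    · simp
    set S₀ : Set (Fin n) := {i | ∃ z ∈ F, (z : α).val.1 = i} with hS₀
    have hS₀A : S₀ ⊆ A := by rintro i ⟨z, hz, rfl⟩; exact z.2.1
    have hS₀ne : S₀.Nonempty := by
      obtain ⟨z, hz⟩ := hFne
      exact ⟨z.val.1, z, hz, rfl⟩
    -- upper bound for F.card
    have himg : ∀ z ∈ F, (z : α).val ∈ cop a S₀ := fun z hz =>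
      mem_cop.mpr ⟨z, hz, rfl⟩
    have hFcard : F.card = (F.image Subtype.val).card :=
      (Finset.card_image_of_injective F Subtype.val_injective).symm
    -- lower bound for the biUnion
    have hbiU : (cop a (nbhd G S₀)).erase y ⊆ F.biUnion r := by
      intro w hw
      rw [Finset.mem_erase, mem_cop] at hw
      obtain ⟨i, hiS₀, hadj⟩ := hw.2
      obtain ⟨z, hz, hzi⟩ := hiS₀
      refine Finset.mem_biUnion.mpr ⟨z, hz, ?_⟩
      rw [hr, Finset.mem_filter, Finset.mem_erase, mem_cop]
      exact ⟨⟨hw.1, nbhd_subset hbip hS₀A hw.2⟩,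
        show G.Adj z.val.1 w.1 from hzi ▸ hadj⟩
    have hbcard : wtf a (nbhd G S₀) ≤ (F.biUnion r).card + 1 := by
      have h1 := Finset.card_le_card hbiU
      have h2 : (cop a (nbhd G S₀)).card - 1 ≤ ((cop a (nbhd G S₀)).erase y).card :=
        Finset.pred_card_le_card_erase
      rw [card_cop] at h2
      omega
    by_cases hAS : ∀ i ∈ A, a i ≠ 0 → i ∈ S₀
    · -- S₀ ⊇ A ∩ supp
      have hxS₀ : x.1 ∈ S₀ := hAS x.1 hxA (Nat.pos_iff_ne_zero.mp x.2.pos)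
      have himg2 : F.image Subtype.val ⊆ (cop a S₀).erase x := by
        intro w hw
        obtain ⟨z, hz, rfl⟩ := Finset.mem_image.mp hw
        exact Finset.mem_erase.mpr ⟨z.2.2, himg z hz⟩
      have hFb : F.card + 1 ≤ wtf a S₀ := by
        have h1 := Finset.card_le_card himg2
        have hxmem : x ∈ cop a S₀ := mem_cop.mpr hxS₀
        rw [Finset.card_erase_of_mem hxmem, card_cop] at h1
        have h2 : a x.1 ≤ wtf a S₀ := le_wtf hxS₀
        have h3 : a x.1 ≠ 0 := Nat.pos_iff_ne_zero.mp x.2.pos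
        omega
      have hNS : wtf a S₀ ≤ wtf a (nbhd G S₀) := by
        have h1 : wtf a S₀ ≤ wtf a A := wtf_le fun i hi _ => hS₀A hi
        have h2 : wtf a B ≤ wtf a (nbhd G S₀) := by
          refine wtf_le fun b hb hba => ?_
          obtain ⟨u, hadj, hua⟩ := F1 hbip hs ha b
          have huA : u ∈ A := adj_sideB (bip_symm hbip) hadj hb
          exact ⟨u, hAS u huA hua, hadj.symm⟩
        have h3 := wtfA_eq_wtfB hs
        omega
      omega
    · push_neg at hAS
      obtain ⟨t, htA, hta, htS₀⟩ := hAS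
      have hF2 := F2 hbip hs hS₀A hS₀ne htA htS₀ hta
      by_cases hxS : x.1 ∈ S₀
      · have himg2 : F.image Subtype.val ⊆ (cop a S₀).erase x := by
          intro w hw
          obtain ⟨z, hz, rfl⟩ := Finset.mem_image.mp hw
          exact Finset.mem_erase.mpr ⟨z.2.2, himg z hz⟩
        have h1 := Finset.card_le_card himg2
        have hxmem : x ∈ cop a S₀ := mem_cop.mpr hxS
        rw [Finset.card_erase_of_mem hxmem, card_cop] at h1
        have h2 : a x.1 ≤ wtf a S₀ := le_wtf hxS
        have h3 : a x.1 ≠ 0 := Nat.pos_iff_ne_zero.mp x.2.pos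
        omega
      · have himg2 : F.image Subtype.val ⊆ cop a S₀ := by
          intro w hw
          obtain ⟨z, hz, rfl⟩ := Finset.mem_image.mp hw
          exact himg z hz
        have h1 := Finset.card_le_card himg2
        rw [card_cop] at h1
        omega
  obtain ⟨f, hfinj, hfr⟩ := (Finset.all_card_le_biUnion_card_iff_existsInjective' r).mp hall
  have hfB : ∀ z : α, (f z).1 ∈ B ∧ f z ≠ y ∧ H.Adj z.val (f z) := by
    intro z
    have := hfr z
    rw [hr, Finset.mem_filter, Finset.mem_erase, mem_cop] at this
    exact ⟨this.1.2, this.1.1, this.2⟩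
  -- the bijection between the two sides
  have hcards : Fintype.card {z : Σ i, Fin (a i) // z.1 ∈ A}
      = Fintype.card {z : Σ i, Fin (a i) // z.1 ∈ B} := by
    have hA' : Fintype.card {z : Σ i, Fin (a i) // z.1 ∈ A} = (cop a A).card := by
      rw [Fintype.card_subtype]
      congr 1
    have hB' : Fintype.card {z : Σ i, Fin (a i) // z.1 ∈ B} = (cop a B).card := by
      rw [Fintype.card_subtype]
      congr 1
    rw [hA', hB', card_cop, card_cop, wtfA_eq_wtfB hs]
  set F0 : {z : Σ i, Fin (a i) // z.1 ∈ A} → {z : Σ i, Fin (a i) // z.1 ∈ B} :=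
    fun z => if h : z.val = x then ⟨y, hyB⟩
      else ⟨f ⟨z.val, z.prop, h⟩, (hfB ⟨z.val, z.prop, h⟩).1⟩ with hF0
  have hF0inj : Function.Injective F0 := by
    intro z1 z2 heq
    by_cases h1 : z1.val = x <;> by_cases h2 : z2.val = x
    · exact Subtype.ext (h1.trans h2.symm)
    · rw [hF0] at heq
      simp only [dif_pos h1, dif_neg h2] at heq
      exact absurd (congrArg Subtype.val heq).symm (hfB ⟨z2.val, z2.prop, h2⟩).2.1
    · rw [hF0] at heq
      simp only [dif_pos h2, dif_neg h1] at heq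
      exact absurd (congrArg Subtype.val heq) (hfB ⟨z1.val, z1.prop, h1⟩).2.1
    · rw [hF0] at heq
      simp only [dif_neg h1, dif_neg h2] at heq
      have hval := hfinj (Subtype.ext_iff.mp heq)
      exact Subtype.ext (congrArg (Subtype.val : α → _) hval)
  have hF0adj : ∀ z, H.Adj z.val (F0 z).val := by
    intro z
    by_cases h : z.val = x
    · rw [hF0]
      simp only [dif_pos h]
      exact h ▸ hxy
    · rw [hF0]
      simp only [dif_neg h]
      exact (hfB ⟨z.val, z.prop, h⟩).2.2
  have hbij : Function.Bijective F0 :=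
    (Fintype.bijective_iff_injective_and_card F0).mpr ⟨hF0inj, hcards⟩
  set E := Equiv.ofBijective F0 hbij with hE
  have hEapp : ∀ z, E z = F0 z := fun z => rfl
  set g : (Σ i, Fin (a i)) → (Σ i, Fin (a i)) :=
    fun z => if h : z.1 ∈ A then (E ⟨z, h⟩).val
      else (E.symm ⟨z, mem_B_of_not_A hbip h⟩).val with hg
  have hgA : ∀ (z) (h : z.1 ∈ A), g z = (E ⟨z, h⟩).val := by
    intro z h
    rw [hg]
    simp only [dif_pos h]
  have hgB : ∀ (z) (h : z.1 ∉ A), g z = (E.symm ⟨z, mem_B_of_not_A hbip h⟩).val := by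
    intro z h
    rw [hg]
    simp only [dif_neg h]
  have hgadj : ∀ z, H.Adj z (g z) := by
    intro z
    by_cases h : z.1 ∈ A
    · rw [hgA z h, hEapp]
      exact hF0adj ⟨z, h⟩
    · rw [hgB z h]
      have h2 : (E (E.symm ⟨z, mem_B_of_not_A hbip h⟩)).val = z :=
        congrArg Subtype.val (E.apply_symm_apply _)
      have h3 := hF0adj (E.symm ⟨z, mem_B_of_not_A hbip h⟩)
      rw [← hEapp] at h3
      rw [h2] at h3
      exact h3.symm
  have hginv : ∀ z, g (g z) = z := by
    intro z
    by_cases h : z.1 ∈ A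
    · rw [hgA z h]
      have hB' : (E ⟨z, h⟩).val.1 ∈ B := (E ⟨z, h⟩).prop
      have hnA : (E ⟨z, h⟩).val.1 ∉ A := not_mem_A hbip hB'
      rw [hgB _ hnA]
      have : (⟨(E ⟨z, h⟩).val, mem_B_of_not_A hbip hnA⟩ :
          {z : Σ i, Fin (a i) // z.1 ∈ B}) = E ⟨z, h⟩ := Subtype.ext rfl
      rw [this, Equiv.symm_apply_apply]
    · rw [hgB z h]
      have hA' : (E.symm ⟨z, mem_B_of_not_A hbip h⟩).val.1 ∈ A :=
        (E.symm ⟨z, mem_B_of_not_A hbip h⟩).prop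
      rw [hgA _ hA']
      have : (⟨(E.symm ⟨z, mem_B_of_not_A hbip h⟩).val, hA'⟩ :
          {z : Σ i, Fin (a i) // z.1 ∈ A}) = E.symm ⟨z, mem_B_of_not_A hbip h⟩ :=
        Subtype.ext rfl
      rw [this, Equiv.apply_symm_apply]
  have hgx : g x = y := by
    rw [hgA x hxA, hEapp, hF0]
    simp
  refine ⟨⟨Set.univ, fun u v => g u = v ∧ g v = u, ?_, ?_, ?_⟩, ?_, ?_⟩
  · intro u v h
    exact h.1 ▸ hgadj u
  · intro u v _
    trivial
  · exact ⟨fun u v h => ⟨h.2, h.1⟩⟩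
  · rw [SimpleGraph.Subgraph.isPerfectMatching_iff]
    intro v
    exact ⟨g v, ⟨rfl, hginv v⟩, fun w hw => hw.1.symm⟩
  · rw [SimpleGraph.Subgraph.mem_edgeSet]
    exact ⟨hgx, by rw [← hgx, hginv]⟩

end Aux3

/-- **Theorem.** For a connected bipartite graph `G` with bipartition `(A,B)`, a vector
`a ≠ 0` is a solution of `(*)` iff `supp(a)` is a dominating set of `G` and the
parallelization `G^a` is matching-covered. -/
theorem solvesStar_iff_matchingCovered {n : ℕ}
    (G : SimpleGraph (Fin n)) (A B : Set (Fin n))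
    (hconn : G.Connected) (hbip : IsBipartitionOf G A B) (a : Fin n → ℕ) (ha : a ≠ 0) :
    SolvesStar G A B a ↔
      IsDominatingSet G {i | a i ≠ 0} ∧ IsMatchingCovered (parallelization G a) := by
  classical
  constructor
  · intro hs
    have hF1 := F1 hbip hs ha
    obtain ⟨i₀, hi₀⟩ : ∃ i, a i ≠ 0 := Function.ne_iff.mp ha
    refine ⟨?_, ?_, ?_, ?_⟩
    · intro v _
      obtain ⟨u, hadj, hu⟩ := hF1 v
      exact ⟨u, hu, hadj⟩
    · haveI : Nonempty ((i : Fin n) × Fin (a i)) := ⟨⟨i₀, ⟨0, Nat.pos_of_ne_zero hi₀⟩⟩⟩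
      exact SimpleGraph.Connected.mk (H_preconnected hbip hs ha)
    · obtain ⟨u, hadj, hu⟩ := hF1 i₀
      exact ⟨s(⟨i₀, ⟨0, Nat.pos_of_ne_zero hi₀⟩⟩, ⟨u, ⟨0, Nat.pos_of_ne_zero hu⟩⟩),
        (SimpleGraph.mem_edgeSet _).mpr
          (show (parallelization G a).Adj ⟨i₀, _⟩ ⟨u, _⟩ from hadj)⟩
    · intro e
      induction e using Sym2.ind with
      | _ x y =>
        intro he
        have hxy : (parallelization G a).Adj x y := (SimpleGraph.mem_edgeSet _).mp he
        rcases hbip.1 x.1 with h | h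
        · exact F4 hbip hs ha hxy h
        · exact F4 (bip_symm hbip) (solves_symm hs) ha hxy h
  · rintro ⟨hdom, hmc⟩
    constructor
    · rw [finsum_mem_eq_wtf, finsum_mem_eq_wtf]
      exact B0 hbip hmc
    · intro C hC h1 h2
      rw [finsum_mem_eq_wtf, finsum_mem_eq_wtf]
      exact B3 hbip hdom hmc hC h1 h2
end

section
/- Let G be a connected bipartite graph on n vertices with vertex set V = {1,…,n}, and let a ∈ ℕ^n with supp(a) = V be such that the parallelization G^a is a matching-covered graph. Then |a| ≥ φ(G) + n − 1. -/
open MvPolynomial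

set_option linter.unusedSectionVars false

namespace MCPProof

open List Finset

variable {V : Type} [DecidableEq V]

/-! ### weighted matchings -/

/-- An `a`-matching on `G`: symmetric edge multiplicities with degree sums `a`. -/
def AMat (G : SimpleGraph V) [Fintype V] (a : V → ℕ) (m : V → V → ℕ) : Prop :=
  (∀ i j, m i j = m j i) ∧ (∀ i j, m i j ≠ 0 → G.Adj i j) ∧ (∀ i, ∑ j, m i j = a i)

/-! ### edges of ears -/

def earEdges (L : List V) : List (Sym2 V) := (L.zip L.tail).map fun p => s(p.1, p.2)

lemma mem_earEdges {L : List V} {e : Sym2 V} : e ∈ earEdges L ↔ e ∈ earEdgeSet L := by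
  simp only [earEdges, earEdgeSet, List.mem_map, Set.mem_setOf_eq, eq_comm]

def covL (ears : List (List V)) : List (Sym2 V) := (ears.map earEdges).flatten

lemma mem_covL {ears : List (List V)} {e : Sym2 V} :
    e ∈ covL ears ↔ ∃ L ∈ ears, e ∈ earEdgeSet L := by
  simp only [covL, List.mem_flatten, List.mem_map]
  constructor
  · rintro ⟨l, ⟨L, hL, rfl⟩, he⟩
    exact ⟨L, hL, mem_earEdges.mp he⟩
  · rintro ⟨L, hL, he⟩
    exact ⟨earEdges L, ⟨L, hL, rfl⟩, mem_earEdges.mpr he⟩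

lemma covL_append {ears : List (List V)} {L : List V} :
    covL (ears ++ [L]) = covL ears ++ earEdges L := by
  simp [covL]

/-! ### zip-tail helpers -/

lemma pair_mem_left : ∀ {L : List V} {p : V × V}, p ∈ L.zip L.tail → p.1 ∈ L ∧ p.2 ∈ L := by
  intro L
  induction L with
  | nil => simp
  | cons a t ih =>
    intro p hp
    cases t with
    | nil => simp at hp
    | cons b t' =>
      rcases List.mem_cons.mp hp with h | h
      · subst h; exact ⟨List.mem_cons_self, List.mem_cons_of_mem _ (List.mem_cons_self)⟩
      · have := ih (p := p) h
        exact ⟨List.mem_cons_of_mem _ this.1, List.mem_cons_of_mem _ this.2⟩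

lemma chain'_of_pair {R : V → V → Prop} :
    ∀ {L : List V} {p : V × V}, L.Chain' R → p ∈ L.zip L.tail → R p.1 p.2 := by
  intro L
  induction L with
  | nil => simp
  | cons a t ih =>
    intro p hch hp
    cases t with
    | nil => simp at hp
    | cons b t' =>
      rcases List.mem_cons.mp hp with h | h
      · subst h; exact (List.isChain_cons_cons.mp hch).1
      · exact ih (List.isChain_cons_cons.mp hch).2 h

/-- in a list of length ≥ 3, every consecutive pair touches the interior -/
lemma pair_touch_interior : ∀ {L : List V} {p : V × V}, 3 ≤ L.length →
    p ∈ L.zip L.tail → p.1 ∈ L.tail.dropLast ∨ p.2 ∈ L.tail.dropLast := by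
  intro L
  induction L with
  | nil => simp
  | cons a t ih =>
    intro p hlen hp
    cases t with
    | nil => simp at hp
    | cons b t' =>
      cases t' with
      | nil => simp at hlen
      | cons c t'' =>
        rcases List.mem_cons.mp hp with h | h
        · subst h
          right
          show b ∈ (b :: c :: t'').dropLast
          rw [List.dropLast_cons₂]
          exact List.mem_cons_self
        · rcases List.mem_cons.mp h with h' | h'
          · subst h'
            left
            show b ∈ (b :: c :: t'').dropLast
            rw [List.dropLast_cons₂]
            exact List.mem_cons_self
          · -- p ∈ (c::t'').zip t''  which is (b::c::t'').zip its tail shifted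
            have hmem : p ∈ (b :: c :: t'').zip (b :: c :: t'').tail :=
              List.mem_cons_of_mem _ h'
            cases t'' with
            | nil => simp at h'
            | cons dd t₃ =>
              have := ih (p := p) (by simp) hmem
              rcases this with h2 | h2
              · left
                show _ ∈ (b :: c :: dd :: t₃).dropLast
                rw [List.dropLast_cons₂]
                exact List.mem_cons_of_mem _ h2
              · right
                show _ ∈ (b :: c :: dd :: t₃).dropLast
                rw [List.dropLast_cons₂]
                exact List.mem_cons_of_mem _ h2

/-- every interior vertex has a predecessor pair and a successor pair -/
lemma interior_pairs : ∀ {L : List V} {w : V}, w ∈ L.tail.dropLast →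
    ∃ u v, (u, w) ∈ L.zip L.tail ∧ (w, v) ∈ L.zip L.tail := by
  intro L
  induction L with
  | nil => simp
  | cons a t ih =>
    intro w hw
    cases t with
    | nil => simp at hw
    | cons b t' =>
      cases t' with
      | nil => simp at hw
      | cons c t'' =>
        rw [show (a :: b :: c :: t'').tail = b :: c :: t'' from rfl,
          List.dropLast_cons₂] at hw
        rcases List.mem_cons.mp hw with h | h
        · subst h
          exact ⟨a, c, List.mem_cons_self,
            List.mem_cons_of_mem _ (List.mem_cons_self)⟩
        · have hw' : w ∈ (b :: c :: t'').tail.dropLast := h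
          obtain ⟨u, v, h1, h2⟩ := ih hw'
          exact ⟨u, v, List.mem_cons_of_mem _ h1, List.mem_cons_of_mem _ h2⟩

/-- every non-last element has a successor pair -/
lemma dropLast_pairs : ∀ {L : List V} {w : V}, w ∈ L.dropLast →
    ∃ v, (w, v) ∈ L.zip L.tail := by
  intro L
  induction L with
  | nil => simp
  | cons a t ih =>
    intro w hw
    cases t with
    | nil => simp at hw
    | cons b t' =>
      rw [List.dropLast_cons₂] at hw
      rcases List.mem_cons.mp hw with h | h
      · subst h; exact ⟨b, List.mem_cons_self⟩
      · obtain ⟨v, hv⟩ := ih h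
        exact ⟨v, List.mem_cons_of_mem _ hv⟩

lemma pair_last : ∀ {l : List V} (h : l ≠ []) (b : V),
    (l.getLast h, b) ∈ (l ++ [b]).zip (l ++ [b]).tail := by
  intro l
  induction l with
  | nil => simp
  | cons a t ih =>
    intro _ b
    cases t with
    | nil => simp
    | cons c t' =>
      rw [List.getLast_cons (by simp)]
      have := ih (by simp) b
      exact List.mem_cons_of_mem _ this

lemma chain'_parity (c : V → Bool) :
    ∀ (l : List V) (h : l ≠ []), List.Chain' (fun u v => c u ≠ c v) l →
      (c (l.getLast h) = c (l.head h) ↔ l.length % 2 = 1) := by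
  intro l
  induction l with
  | nil => simp
  | cons a t ih =>
    intro h hch
    cases t with
    | nil => simp
    | cons b t' =>
      have hab : c a ≠ c b := (List.isChain_cons_cons.mp hch).1
      have ih' := ih (by simp) (List.isChain_cons_cons.mp hch).2
      rw [List.getLast_cons (by simp : (b :: t') ≠ [])]
      simp only [List.head_cons, List.length_cons] at ih' ⊢
      have hbool : ∀ p q r : Bool, q ≠ r → (p = r ↔ ¬(p = q)) := by decide
      rw [hbool _ (c b) (c a) (Ne.symm hab), ih']
      omega

lemma exists_dup_split : ∀ {l : List V}, ¬ l.Nodup →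
    ∃ (x : V) (l₁ l₂ l₃ : List V), l = l₁ ++ x :: l₂ ++ x :: l₃ := by
  intro l
  induction l with
  | nil => intro h; exact absurd List.nodup_nil h
  | cons a t ih =>
    intro h
    by_cases ha : a ∈ t
    · obtain ⟨s, u, rfl⟩ := List.append_of_mem ha
      exact ⟨a, [], s, u, by simp⟩
    · have : ¬ t.Nodup := fun hn => h (List.nodup_cons.mpr ⟨ha, hn⟩)
      obtain ⟨x, l₁, l₂, l₃, rfl⟩ := ih this
      exact ⟨x, a :: l₁, l₂, l₃, by simp⟩

/-! ### vertex set and budget -/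

def stV (ears : List (List V)) : Finset V := ears.flatten.toFinset

lemma mem_stV {ears : List (List V)} {v : V} : v ∈ stV ears ↔ v ∈ ears.flatten :=
  List.mem_toFinset

lemma covL_endpoint {ears : List (List V)} {u v : V} (h : s(u,v) ∈ covL ears) :
    u ∈ stV ears ∧ v ∈ stV ears := by
  rw [mem_covL] at h
  obtain ⟨L, hL, p, hp, hpe⟩ := h
  have hm := pair_mem_left hp
  have h1 : p.1 ∈ stV ears := mem_stV.mpr (List.mem_flatten.mpr ⟨L, hL, hm.1⟩)
  have h2 : p.2 ∈ stV ears := mem_stV.mpr (List.mem_flatten.mpr ⟨L, hL, hm.2⟩)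
  rcases Sym2.eq_iff.mp hpe with ⟨rfl, rfl⟩ | ⟨rfl, rfl⟩
  · exact ⟨h1, h2⟩
  · exact ⟨h2, h1⟩

def evCnt (ears : List (List V)) : ℕ := (ears.filter (fun L => L.length % 2 == 1)).length

lemma evCnt_append {ears : List (List V)} {L : List V} :
    evCnt (ears ++ [L]) = evCnt ears + (if L.length % 2 = 1 then 1 else 0) := by
  simp only [evCnt, List.filter_append]
  rw [List.length_append]
  congr 1
  by_cases h : L.length % 2 = 1 <;> simp [h]

lemma stV_append {ears : List (List V)} {L : List V} :
    stV (ears ++ [L]) = stV ears ∪ L.toFinset := by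
  simp [stV, List.flatten_append]

section WithFintype
variable [Fintype V]

def edelta (m : V → V → ℕ) (C : List (Sym2 V)) (i : V) : ℕ :=
  ∑ j, if s(i,j) ∈ C then 0 else m i j

lemma edelta_anti {m : V → V → ℕ} {C C' : List (Sym2 V)} (h : ∀ e ∈ C, e ∈ C') (i : V) :
    edelta m C' i ≤ edelta m C i := by
  refine Finset.sum_le_sum fun j _ => ?_
  by_cases hj : s(i,j) ∈ C
  · simp [hj, h _ hj]
  · by_cases hj' : s(i,j) ∈ C' <;> simp [hj, hj']

lemma edelta_drop {m : V → V → ℕ} {C C' : List (Sym2 V)} (h : ∀ e ∈ C, e ∈ C')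
    {i j₀ : V} (hnot : s(i,j₀) ∉ C) (hin : s(i,j₀) ∈ C') :
    edelta m C' i + m i j₀ ≤ edelta m C i := by
  have : m i j₀ = ∑ j, if j = j₀ then m i j else 0 := by simp
  rw [this, edelta, edelta, ← Finset.sum_add_distrib]
  refine Finset.sum_le_sum fun j _ => ?_
  by_cases hj : j = j₀
  · subst hj
    simp [hin, hnot]
  · by_cases hjC : s(i,j) ∈ C
    · simp [hjC, h _ hjC, hj]
    · by_cases hjC' : s(i,j) ∈ C' <;> simp [hjC, hjC', hj]

lemma edelta_fresh {m : V → V → ℕ} {C : List (Sym2 V)} {a : V → ℕ}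
    {i y : V} (hin : s(i,y) ∈ C) (hm : 1 ≤ m i y) (ham : ∑ j, m i j = a i) :
    edelta m C i + 1 ≤ a i := by
  have h1 : edelta m C i + m i y ≤ a i := by
    have : m i y = ∑ j, if j = y then m i j else 0 := by simp
    rw [this, edelta, ← Finset.sum_add_distrib, ← ham]
    refine Finset.sum_le_sum fun j _ => ?_
    by_cases hj : j = y
    · subst hj; simp [hin]
    · by_cases hjC : s(i,j) ∈ C <;> simp [hjC, hj]
  omega

lemma edelta_zero {m : V → V → ℕ} {C : List (Sym2 V)} {G : SimpleGraph V}
    (hadj : ∀ i j, m i j ≠ 0 → G.Adj i j)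
    (hall : ∀ i j, G.Adj i j → s(i,j) ∈ C) (i : V) :
    edelta m C i = 0 := by
  refine Finset.sum_eq_zero fun j _ => ?_
  by_cases hm : m i j = 0
  · simp [hm]
  · simp [hall i j (hadj i j hm)]

def Budget (a : V → ℕ) (m : V → V → ℕ) (ears : List (List V)) : Prop :=
  evCnt ears + (∑ i ∈ stV ears, edelta m (covL ears) i) + (stV ears).card ≤
    (∑ i ∈ stV ears, a i) + 1

end WithFintype

end MCPProof

namespace MCPProof

open List Finset

variable {V : Type} [DecidableEq V]

structure GoodEars (G : SimpleGraph V) (ears : List (List V)) : Prop where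
  ne : ears ≠ []
  chain : ∀ L ∈ ears, L.Chain' G.Adj
  shape : ∀ L ∈ ears, IsEarList L
  first : ∀ L ∈ ears.head?, IsCycleEarList L
  attE : ∀ (i : ℕ) (hi : i < ears.length), 1 ≤ i →
      (∀ x ∈ (ears.get ⟨i, hi⟩).head?, x ∈ (ears.take i).flatten) ∧
      (∀ x ∈ (ears.get ⟨i, hi⟩).getLast?, x ∈ (ears.take i).flatten)
  attI : ∀ (i : ℕ) (hi : i < ears.length), 1 ≤ i →
      ∀ x ∈ (ears.get ⟨i, hi⟩).tail.dropLast, x ∉ (ears.take i).flatten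
  disj : ∀ (i j : ℕ) (hi : i < ears.length) (hj : j < ears.length), i ≠ j →
      Disjoint (earEdgeSet (ears.get ⟨i, hi⟩)) (earEdgeSet (ears.get ⟨j, hj⟩))

lemma GoodEars.append {G : SimpleGraph V} {ears : List (List V)} (h : GoodEars G ears)
    {L : List V} (hch : L.Chain' G.Adj) (hsh : IsEarList L)
    (hhead : ∀ x ∈ L.head?, x ∈ ears.flatten) (hlast : ∀ x ∈ L.getLast?, x ∈ ears.flatten)
    (hint : ∀ x ∈ L.tail.dropLast, x ∉ ears.flatten)
    (hunc : ∀ e ∈ earEdgeSet L, e ∉ covL ears) :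
    GoodEars G (ears ++ [L]) := by
  have hlen : (ears ++ [L]).length = ears.length + 1 := by simp
  have hget_lt : ∀ (i : ℕ) (hi : i < ears.length + 1) (hi' : i < ears.length),
      (ears ++ [L]).get ⟨i, by omega⟩ = ears.get ⟨i, hi'⟩ := by
    intro i hi hi'
    simp [List.get_eq_getElem, List.getElem_append_left hi']
  have hget_last : (ears ++ [L]).get ⟨ears.length, by simp⟩ = L := by
    simp [List.get_eq_getElem]
  have htake : ∀ (i : ℕ), i ≤ ears.length → (ears ++ [L]).take i = ears.take i := by
    intro i hi
    exact List.take_append_of_le_length hi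
  constructor
  · simp
  · intro L' hL'
    rcases List.mem_append.mp hL' with hh | hh
    · exact h.chain L' hh
    · rw [List.mem_singleton.mp hh]; exact hch
  · intro L' hL'
    rcases List.mem_append.mp hL' with hh | hh
    · exact h.shape L' hh
    · rw [List.mem_singleton.mp hh]; exact hsh
  · intro L' hL'
    have hne : ears ≠ [] := h.ne
    rw [List.head?_append_of_ne_nil _ hne] at hL'
    exact h.first L' hL'
  · intro i hi h1
    by_cases hlt : i < ears.length
    · rw [hlen] at hi
      rw [hget_lt i hi hlt, htake i (le_of_lt hlt)]
      exact h.attE i hlt h1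
    · have : i = ears.length := by rw [hlen] at hi; omega
      subst this
      rw [hget_last, htake _ le_rfl, List.take_length]
      exact ⟨hhead, hlast⟩
  · intro i hi h1 x hx
    by_cases hlt : i < ears.length
    · rw [hlen] at hi
      rw [hget_lt i hi hlt] at hx
      rw [htake i (le_of_lt hlt)]
      exact h.attI i hlt h1 x hx
    · have : i = ears.length := by rw [hlen] at hi; omega
      subst this
      rw [hget_last] at hx
      rw [htake _ le_rfl, List.take_length]
      exact hint x hx
  · intro i j hi hj hij
    rw [hlen] at hi hj
    have key : ∀ (k : ℕ) (hk : k < ears.length),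
        Disjoint (earEdgeSet (ears.get ⟨k, hk⟩)) (earEdgeSet L) := by
      intro k hk
      rw [Set.disjoint_right]
      intro e he he'
      exact hunc e he (mem_covL.mpr ⟨ears.get ⟨k, hk⟩, List.get_mem _ _, he'⟩)
    by_cases hlt : i < ears.length
    · by_cases hlt' : j < ears.length
      · rw [hget_lt i hi hlt, hget_lt j hj hlt']
        exact h.disj i j hlt hlt' hij
      · have : j = ears.length := by omega
        subst this
        rw [hget_lt i hi hlt, hget_last]
        exact key i hlt
    · have : i = ears.length := by omega
      subst this
      have hlt' : j < ears.length := by omega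
      rw [hget_lt j hj hlt', hget_last]
      exact (key j hlt').symm

end MCPProof

namespace MCPProof

open List Finset

variable {V : Type} [DecidableEq V] [Fintype V]

lemma bool_trans1 : ∀ p q r : Bool, ¬(q = p) → ¬(r = q) → r = p := by decide
lemma bool_trans2 : ∀ p q r : Bool, q = p → ¬(r = q) → ¬(r = p) := by decide

/-- The key alternating-walk existence lemma: if `x₀` is in `S`, `x₁ ∉ S`,
`m` puts no mass on the edge `x₀x₁` while the `a`-matching `m'` covers it,
then there is a simple path from `x₀` through fresh vertices back to `S`,
whose interior vertices all touch an `m`-positive path edge, and which,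
if it has evenly many edges, ends with an `m`-positive edge. -/
lemma exists_alt_path {G : SimpleGraph V} {a : V → ℕ} {c : V → Bool}
    (hc : ∀ ⦃u v⦄, G.Adj u v → c u ≠ c v)
    {m m' : V → V → ℕ} (hm : AMat G a m) (hm' : AMat G a m')
    (S : Finset V) {x₀ x₁ : V} (h0 : x₀ ∈ S) (h1 : x₁ ∉ S)
    (hadj : G.Adj x₀ x₁) (hme : m x₀ x₁ = 0) (hm'e : 1 ≤ m' x₀ x₁) :
    ∃ (ins : List V) (z : V),
      z ∈ S ∧ (∀ w ∈ ins, w ∉ S) ∧ ins ≠ [] ∧ (x₀ :: ins).Nodup ∧ z ∉ ins ∧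
      (z = x₀ → 2 ≤ ins.length) ∧
      (x₀ :: (ins ++ [z])).Chain' G.Adj ∧
      (∀ w ∈ ins, ∃ u, s(w,u) ∈ earEdges (x₀ :: (ins ++ [z])) ∧ 1 ≤ m w u) ∧
      (ins.length % 2 = 1 →
        ∃ u, u ∉ S ∧ s(u,z) ∈ earEdges (x₀ :: (ins ++ [z])) ∧ 1 ≤ m u z) := by
  classical
  set d : V → V → ℤ := fun u v => (m' u v : ℤ) - (m u v : ℤ) with hd_def
  have hd_symm : ∀ u v, d u v = d v u := by
    intro u v; simp only [hd_def, hm.1 u v, hm'.1 u v]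
  have hd_adj : ∀ u v, d u v ≠ 0 → G.Adj u v := by
    intro u v h
    by_cases h1 : m u v = 0
    · by_cases h2 : m' u v = 0
      · exfalso; apply h; simp [hd_def, h1, h2]
      · exact hm'.2.1 u v h2
    · exact hm.2.1 u v h1
  have hd_sum : ∀ u, ∑ v, d u v = 0 := by
    intro u
    simp only [hd_def]
    rw [Finset.sum_sub_distrib, ← Nat.cast_sum, ← Nat.cast_sum, hm.2.2 u, hm'.2.2 u, sub_self]
  have hd_e : 1 ≤ d x₀ x₁ := by
    simp only [hd_def, hme]
    omega
  set stepOK : V → V → Prop :=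
    fun v u => v ∉ S ∧ (c v = c x₀ → 1 ≤ d v u) ∧ (¬(c v = c x₀) → d v u ≤ -1)
    with hstep_def
  have hstep_adj : ∀ {v u}, stepOK v u → G.Adj v u := by
    intro v u hs
    by_cases hv : c v = c x₀
    · exact hd_adj v u (by have := hs.2.1 hv; omega)
    · exact hd_adj v u (by have := hs.2.2 hv; omega)
  have hstep_m : ∀ {v u}, stepOK v u → ¬(c v = c x₀) → 1 ≤ m v u := by
    intro v u hs hv
    have := hs.2.2 hv
    simp only [hd_def] at this
    omega
  set FW : List V → Prop := fun W => ∃ t, W = x₀ :: x₁ :: t ∧ List.Chain' stepOK (x₁ :: t)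
    with hFW_def
  have hcx₁ : ¬ (c x₁ = c x₀) := fun h => (hc hadj) h.symm
  have hFW0 : FW [x₀, x₁] := ⟨[], rfl, List.isChain_singleton _⟩
  have hext : ∀ W v u, FW W → W.getLast? = some v → stepOK v u →
      FW (W ++ [u]) ∧ (W ++ [u]).getLast? = some u := by
    rintro W v u ⟨t, rfl, hch⟩ hlast hstep
    refine ⟨⟨t ++ [u], by simp, ?_⟩, by
      rw [show x₀ :: x₁ :: t ++ [u] = (x₀ :: x₁ :: t) ++ [u] from rfl, List.getLast?_concat]⟩
    show List.IsChain _ _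
    rw [show x₁ :: (t ++ [u]) = (x₁ :: t) ++ [u] from rfl, List.isChain_append]
    refine ⟨hch, List.isChain_singleton _, ?_⟩
    intro p hp q hq
    have hWl : (x₀ :: x₁ :: t).getLast? = (x₁ :: t).getLast? := List.getLast?_cons_cons
    rw [hWl] at hlast
    rw [hlast] at hp
    simp only [Option.mem_some_iff] at hp
    simp only [List.head?_cons, Option.mem_some_iff] at hq
    subst hp; subst hq
    exact hstep
  -- ## Reachability, by a counting argument
  have hreach : ∃ W, FW W ∧ ∃ z, W.getLast? = some z ∧ z ∈ S := by
    by_contra hno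
    push_neg at hno
    set T : Finset V := univ.filter (fun v => ∃ W, FW W ∧ W.getLast? = some v) with hT_def
    have hT : ∀ v, v ∈ T ↔ ∃ W, FW W ∧ W.getLast? = some v := by
      intro v; simp [hT_def]
    have hTS : ∀ v ∈ T, v ∉ S := by
      intro v hv
      obtain ⟨W, h1, h2⟩ := (hT v).mp hv
      exact hno W h1 v h2
    have hx₁T : x₁ ∈ T := (hT x₁).mpr ⟨[x₀, x₁], hFW0, by simp⟩
    set P : Finset V := T.filter (fun v => ¬(c v = c x₀)) with hP_def
    set Q : Finset V := T.filter (fun v => c v = c x₀) with hQ_def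
    have hPstep : ∀ v ∈ P, ∀ u, d v u ≤ -1 → u ∈ Q := by
      intro v hv u hdu
      rw [hP_def, Finset.mem_filter] at hv
      obtain ⟨W, hW, hWl⟩ := (hT v).mp hv.1
      have hs : stepOK v u := ⟨hTS v hv.1, fun h => absurd h hv.2, fun _ => hdu⟩
      obtain ⟨hW', hWl'⟩ := hext W v u hW hWl hs
      have hu : u ∈ T := (hT u).mpr ⟨W ++ [u], hW', hWl'⟩
      rw [hQ_def, Finset.mem_filter]
      refine ⟨hu, ?_⟩
      have hadj' : G.Adj v u := hstep_adj hs
      exact bool_trans1 (c x₀) (c v) (c u) hv.2 (fun h => (hc hadj') h.symm)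
    have hQstep : ∀ v ∈ Q, ∀ u, 1 ≤ d v u → u ∈ P := by
      intro v hv u hdu
      rw [hQ_def, Finset.mem_filter] at hv
      obtain ⟨W, hW, hWl⟩ := (hT v).mp hv.1
      have hs : stepOK v u := ⟨hTS v hv.1, fun _ => hdu, fun h => absurd hv.2 h⟩
      obtain ⟨hW', hWl'⟩ := hext W v u hW hWl hs
      have hu : u ∈ T := (hT u).mpr ⟨W ++ [u], hW', hWl'⟩
      rw [hP_def, Finset.mem_filter]
      refine ⟨hu, ?_⟩
      have hadj' : G.Adj v u := hstep_adj hs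
      exact bool_trans2 (c x₀) (c v) (c u) hv.2 (fun h => (hc hadj') h.symm)
    have hx₁P : x₁ ∈ P := by
      rw [hP_def, Finset.mem_filter]; exact ⟨hx₁T, hcx₁⟩
    have hx₀Q : x₀ ∉ Q := by
      rw [hQ_def, Finset.mem_filter]
      rintro ⟨h, -⟩
      exact hTS x₀ h h0
    have key1 : ∀ v ∈ P, ∑ u ∈ Q, d v u ≤ 0 := by
      intro v hv
      have hsplit : ∑ u ∈ univ \ Q, d v u + ∑ u ∈ Q, d v u = 0 := by
        rw [Finset.sum_sdiff (Finset.subset_univ Q)]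
        exact hd_sum v
      have hnn : ∀ u ∈ univ \ Q, 0 ≤ d v u := by
        intro u hu
        by_contra hlt
        have : d v u ≤ -1 := by omega
        exact (Finset.mem_sdiff.mp hu).2 (hPstep v hv u this)
      have := Finset.sum_nonneg hnn
      omega
    have key1x : ∑ u ∈ Q, d x₁ u ≤ -1 := by
      have hsplit : ∑ u ∈ univ \ Q, d x₁ u + ∑ u ∈ Q, d x₁ u = 0 := by
        rw [Finset.sum_sdiff (Finset.subset_univ Q)]
        exact hd_sum x₁
      have hnn : ∀ u ∈ univ \ Q, 0 ≤ d x₁ u := by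
        intro u hu
        by_contra hlt
        have : d x₁ u ≤ -1 := by omega
        exact (Finset.mem_sdiff.mp hu).2 (hPstep x₁ hx₁P u this)
      have hone : d x₁ x₀ ≤ ∑ u ∈ univ \ Q, d x₁ u :=
        Finset.single_le_sum hnn (Finset.mem_sdiff.mpr ⟨Finset.mem_univ _, hx₀Q⟩)
      have : 1 ≤ d x₁ x₀ := by rw [hd_symm x₁ x₀]; exact hd_e
      omega
    have key2 : ∀ v ∈ Q, 0 ≤ ∑ u ∈ P, d v u := by
      intro v hv
      have hsplit : ∑ u ∈ univ \ P, d v u + ∑ u ∈ P, d v u = 0 := by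
        rw [Finset.sum_sdiff (Finset.subset_univ P)]
        exact hd_sum v
      have hnp : ∀ u ∈ univ \ P, d v u ≤ 0 := by
        intro u hu
        by_contra hlt
        have : 1 ≤ d v u := by omega
        exact (Finset.mem_sdiff.mp hu).2 (hQstep v hv u this)
      have := Finset.sum_nonpos hnp
      omega
    have sumP : ∑ v ∈ P, ∑ u ∈ Q, d v u ≤ -1 := by
      rw [← Finset.add_sum_erase _ _ hx₁P]
      have h2 : ∑ v ∈ P.erase x₁, ∑ u ∈ Q, d v u ≤ 0 :=
        Finset.sum_nonpos fun v hv => key1 v (Finset.mem_of_mem_erase hv)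
      omega
    have sumQ : 0 ≤ ∑ v ∈ Q, ∑ u ∈ P, d v u := Finset.sum_nonneg key2
    have hswap : ∑ v ∈ P, ∑ u ∈ Q, d v u = ∑ v ∈ Q, ∑ u ∈ P, d v u := by
      rw [Finset.sum_comm]
      exact Finset.sum_congr rfl fun u _ => Finset.sum_congr rfl fun v _ => hd_symm v u
    omega
  -- ## take a minimal length walk reaching S
  have hKne : ∃ k, k ∈ {k | ∃ W, (FW W ∧ ∃ z, W.getLast? = some z ∧ z ∈ S) ∧ W.length = k} := by
    obtain ⟨W, h1, h2⟩ := hreach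
    exact ⟨W.length, W, ⟨h1, h2⟩, rfl⟩
  obtain ⟨W, hWgood, hWlen⟩ := Nat.sInf_mem hKne
  have hmin : ∀ W', (FW W' ∧ ∃ z, W'.getLast? = some z ∧ z ∈ S) → W.length ≤ W'.length := by
    intro W' h
    rw [hWlen]
    exact Nat.sInf_le ⟨W', h, rfl⟩
  obtain ⟨⟨t, rfl, hch⟩, z, hWz, hzS⟩ := hWgood
  have hQz : (x₁ :: t).getLast? = some z := by
    rw [← List.getLast?_cons_cons (a := x₀)]
    exact hWz
  set ins : List V := (x₁ :: t).dropLast with hins_def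
  have hQsplit : ins ++ [z] = x₁ :: t :=
    List.dropLast_append_getLast? z hQz
  have hinsS : ∀ w ∈ ins, w ∉ S := by
    intro w hw
    obtain ⟨v, hv⟩ := dropLast_pairs (L := x₁ :: t) hw
    exact (chain'_of_pair hch hv).1
  have hinsne : ins ≠ [] := by
    intro h
    rw [h, List.nil_append] at hQsplit
    have hz1 : z = x₁ := by
      have := congrArg List.head? hQsplit
      simpa using this
    exact h1 (hz1 ▸ hzS)
  have hPzip : (x₀ :: (ins ++ [z])).zip (x₀ :: (ins ++ [z])).tail
      = (x₀, x₁) :: (x₁ :: t).zip t := by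
    rw [hQsplit]
    rfl
  have hchainAdjQ : (x₁ :: t).Chain' G.Adj := hch.imp (fun _ _ h => hstep_adj h)
  have hchainAdjP : (x₀ :: (ins ++ [z])).Chain' G.Adj := by
    rw [hQsplit]
    exact List.isChain_cons_cons.mpr ⟨hadj, hchainAdjQ⟩
  have hx₀ins : x₀ ∉ ins := fun h => hinsS x₀ h h0
  have hzins : z ∉ ins := fun h => hinsS z h hzS
  -- Nodup via minimality
  have hinsNodup : ins.Nodup := by
    by_contra hnd
    obtain ⟨x, l₁, l₂, l₃, hsplit⟩ := exists_dup_split hnd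
    have hQ2 : x₁ :: t = l₁ ++ (x :: l₂) ++ (x :: (l₃ ++ [z])) := by
      rw [← hQsplit, hsplit]
      simp
    have hchQ : List.Chain' stepOK (l₁ ++ ((x :: l₂) ++ (x :: (l₃ ++ [z])))) := by
      rw [← List.append_assoc, ← hQ2]
      exact hch
    change List.IsChain _ _ at hchQ
    rw [List.isChain_append] at hchQ
    obtain ⟨hch1, hch23, hlink1⟩ := hchQ
    rw [List.isChain_append] at hch23
    obtain ⟨hch2, hch3, hlink2⟩ := hch23
    have hchnew : List.Chain' stepOK (l₁ ++ (x :: (l₃ ++ [z]))) := by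
      show List.IsChain _ _
      rw [List.isChain_append]
      refine ⟨hch1, hch3, ?_⟩
      intro p hp q hq
      simp only [List.head?_cons, Option.mem_some_iff] at hq
      subst hq
      exact hlink1 p hp x (by simp)
    have hheadQ : (l₁ ++ (x :: (l₃ ++ [z]))).head? = (x₁ :: t).head? := by
      cases l₁ with
      | nil =>
        have := congrArg List.head? hQ2
        simp only [List.nil_append] at this ⊢
        rw [this]
        simp
      | cons b l₁' =>
        have := congrArg List.head? hQ2
        simp only [List.cons_append, List.head?_cons] at this ⊢
        rw [this]
    cases hL : (l₁ ++ (x :: (l₃ ++ [z]))) with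
    | nil => simp [hL] at hheadQ
    | cons b t'' =>
      rw [hL] at hchnew hheadQ
      simp only [List.head?_cons, Option.some.injEq] at hheadQ
      rw [hheadQ] at hchnew hL
      have hFWnew : FW (x₀ :: x₁ :: t'') := ⟨t'', rfl, hchnew⟩
      have hlastnew : (x₀ :: x₁ :: t'').getLast? = some z := by
        rw [List.getLast?_cons_cons, ← hL,
          show l₁ ++ (x :: (l₃ ++ [z])) = (l₁ ++ (x :: l₃)) ++ [z] by simp,
          List.getLast?_concat]
      have hgood' := hmin (x₀ :: x₁ :: t'') ⟨hFWnew, z, hlastnew, hzS⟩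
      have hlen1 : (x₁ :: t).length = l₁.length + l₂.length + l₃.length + 3 := by
        rw [hQ2]
        simp [List.length_append]
        omega
      have hlen2 : (x₁ :: t'').length = l₁.length + l₃.length + 2 := by
        rw [← hL]
        simp [List.length_append]
        omega
      simp only [List.length_cons] at hgood' hlen1 hlen2
      omega
  -- length ≥ 2 in the closed case
  have hcyclen : z = x₀ → 2 ≤ ins.length := by
    intro hz
    by_contra hlen2
    have hl1 : ins.length = 1 := by
      have := List.length_pos_iff.mpr hinsne
      omega
    obtain ⟨w, hw⟩ := List.length_eq_one_iff.mp hl1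
    rw [hw] at hQsplit
    have hwx : w = x₁ ∧ t = [z] := by
      have h1' := congrArg List.head? hQsplit
      have h2' := congrArg List.tail hQsplit
      simp at h1' h2'
      exact ⟨h1', h2'.symm⟩
    obtain ⟨rfl, rfl⟩ := hwx
    have hstep1 : stepOK w z := (List.isChain_cons_cons.mp hch).1
    have := hstep1.2.2 hcx₁
    rw [hz, hd_symm] at this
    omega
  -- interior coverage
  have hcover : ∀ w ∈ ins, ∃ u, s(w,u) ∈ earEdges (x₀ :: (ins ++ [z])) ∧ 1 ≤ m w u := by
    intro w hw
    have hwint : w ∈ (x₀ :: (ins ++ [z])).tail.dropLast := by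
      show w ∈ (ins ++ [z]).dropLast
      rw [List.dropLast_concat]
      exact hw
    obtain ⟨u, v, hu, hv⟩ := interior_pairs hwint
    have hwS : w ∉ S := hinsS w hw
    by_cases hcw : c w = c x₀
    · -- use predecessor pair (u,w)
      have hu' := hu
      rw [hPzip] at hu'
      rcases List.mem_cons.mp hu' with h | h
      · exfalso
        have : w = x₁ := congrArg Prod.snd h
        rw [this] at hcw
        exact hcx₁ hcw
      · have hst : stepOK u w := chain'_of_pair hch h
        have hcu : ¬ (c u = c x₀) := by
          intro hcu
          exact (hc (hstep_adj hst)) (by rw [hcu, hcw])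
        have hmw : 1 ≤ m u w := hstep_m hst hcu
        refine ⟨u, ?_, by rw [hm.1 w u]; exact hmw⟩
        exact List.mem_map.mpr ⟨(u,w), hu, Sym2.eq_swap⟩
    · -- use successor pair (w,v)
      have hv' := hv
      rw [hPzip] at hv'
      rcases List.mem_cons.mp hv' with h | h
      · exfalso
        have : w = x₀ := congrArg Prod.fst h
        exact hwS (this ▸ h0)
      · have hst : stepOK w v := chain'_of_pair hch h
        have hmw : 1 ≤ m w v := hstep_m hst hcw
        exact ⟨v, List.mem_map.mpr ⟨(w,v), hv, rfl⟩, hmw⟩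
  -- payment for even ears
  have hpay : ins.length % 2 = 1 →
      ∃ u, u ∉ S ∧ s(u,z) ∈ earEdges (x₀ :: (ins ++ [z])) ∧ 1 ≤ m u z := by
    intro hparity
    have hne' : (x₀ :: ins) ≠ [] := by simp
    have hys := pair_last hne' z
    set u := (x₀ :: ins).getLast hne' with hu_def
    have huins : u ∈ ins := by
      rw [hu_def, List.getLast_cons hinsne]
      exact List.getLast_mem hinsne
    have huS : u ∉ S := hinsS u huins
    have hpair : (u, z) ∈ (x₀ :: (ins ++ [z])).zip (x₀ :: (ins ++ [z])).tail := by
      rw [show x₀ :: (ins ++ [z]) = (x₀ :: ins) ++ [z] from rfl]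
      exact hys
    have hpair2 : (u, z) ∈ (x₁ :: t).zip t := by
      have hp2 := hpair
      rw [hPzip] at hp2
      rcases List.mem_cons.mp hp2 with h | h
      · exfalso
        have : u = x₀ := congrArg Prod.fst h
        exact huS (this ▸ h0)
      · exact h
    have hst : stepOK u z := chain'_of_pair hch hpair2
    have hchainNe : List.Chain' (fun p q => c p ≠ c q) (x₀ :: ins) := by
      have hpre : (x₀ :: ins).Chain' G.Adj := by
        have h' := hchainAdjP
        change List.IsChain _ _ at h'
        rw [show x₀ :: (ins ++ [z]) = (x₀ :: ins) ++ [z] from rfl,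
          List.isChain_append] at h'
        exact h'.1
      exact hpre.imp fun p q h => hc h
    have hparu := chain'_parity c (x₀ :: ins) hne' hchainNe
    have hcu : ¬ (c u = c x₀) := by
      intro hcu
      have h2' := hparu.mp (by rw [← hu_def] at hparu ⊢; simpa using hcu)
      simp only [List.length_cons] at h2'
      omega
    have hmz : 1 ≤ m u z := hstep_m hst hcu
    exact ⟨u, huS, List.mem_map.mpr ⟨(u,z), hpair, rfl⟩, hmz⟩
  exact ⟨ins, z, hzS, hinsS, hinsne, List.nodup_cons.mpr ⟨hx₀ins, hinsNodup⟩, hzins,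
    hcyclen, hchainAdjP, hcover, hpay⟩

end MCPProof

namespace MCPProof

open List Finset

variable {V : Type} [DecidableEq V] [Fintype V]

lemma earEdgeSet_pair {u v : V} : earEdgeSet [u, v] = {s(u,v)} := by
  ext e
  constructor
  · rintro ⟨p, hp, rfl⟩
    simp only [List.tail_cons, List.zip_cons_cons, List.zip_nil_right, List.mem_singleton] at hp
    subst hp
    rfl
  · rintro rfl
    exact ⟨(u,v), by simp, rfl⟩

lemma earEdgeSet_two_cycle {u v : V} : earEdgeSet [u, v, u] = {s(u,v)} := by
  ext e
  constructor
  · rintro ⟨p, hp, rfl⟩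
    simp only [List.tail_cons, List.zip_cons_cons, List.zip_nil_right] at hp
    rcases List.mem_cons.mp hp with h | h
    · subst h; rfl
    · rcases List.mem_cons.mp h with h' | h'
      · subst h'; exact Sym2.eq_swap
      · simp at h'
  · rintro rfl
    exact ⟨(u,v), by simp, rfl⟩

lemma uncovered_of_interior {ears : List (List V)} {L : List V} (h3 : 3 ≤ L.length)
    (hint : ∀ x ∈ L.tail.dropLast, x ∉ stV ears) : ∀ e ∈ earEdgeSet L, e ∉ covL ears := by
  rintro e ⟨p, hp, rfl⟩ hcv
  rcases pair_touch_interior h3 hp with h | h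
  · exact hint _ h (covL_endpoint hcv).1
  · exact hint _ h (covL_endpoint hcv).2

lemma init_good {G : SimpleGraph V} {a : V → ℕ} {m : V → V → ℕ} (hm : AMat G a m)
    {x y : V} (hadj : G.Adj x y) (hmxy : 1 ≤ m x y) :
    GoodEars G [[x, y, x]] ∧ Budget a m [[x, y, x]] := by
  have hne : x ≠ y := hadj.ne
  constructor
  · constructor
    · simp
    · intro L hL
      rw [List.mem_singleton.mp hL]
      exact List.isChain_cons_cons.mpr ⟨hadj, List.isChain_cons_cons.mpr ⟨hadj.symm, List.isChain_singleton _⟩⟩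
    · intro L hL
      rw [List.mem_singleton.mp hL]
      exact Or.inr (Or.inr ⟨x, y, hne, rfl⟩)
    · intro L hL
      simp only [List.head?_cons, Option.mem_some_iff] at hL
      rw [← hL]
      exact Or.inr ⟨x, y, hne, rfl⟩
    · intro i hi h1
      simp only [List.length_singleton] at hi
      omega
    · intro i hi h1
      simp only [List.length_singleton] at hi
      omega
    · intro i j hi hj hij
      simp only [List.length_singleton] at hi hj
      omega
  · have hflat : ([[x, y, x]] : List (List V)).flatten = [x, y, x] := by simp
    have hst : stV [[x, y, x]] = {x, y} := by
      rw [stV, hflat]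
      ext w
      simp
      tauto
    have hcovxy : s(x,y) ∈ covL [[x, y, x]] :=
      mem_covL.mpr ⟨[x,y,x], by simp, by rw [earEdgeSet_two_cycle]; rfl⟩
    have hcovyx : s(y,x) ∈ covL [[x, y, x]] := by
      rw [Sym2.eq_swap]; exact hcovxy
    have hdx : edelta m (covL [[x,y,x]]) x + 1 ≤ a x :=
      edelta_fresh hcovxy hmxy (hm.2.2 x)
    have hdy : edelta m (covL [[x,y,x]]) y + 1 ≤ a y :=
      edelta_fresh hcovyx (by rw [hm.1 y x]; exact hmxy) (hm.2.2 y)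
    rw [Budget, hst]
    have hcard : ({x, y} : Finset V).card = 2 := by
      rw [Finset.card_insert_of_notMem (by simp [hne]), Finset.card_singleton]
    have hsum1 : ∑ i ∈ ({x, y} : Finset V), edelta m (covL [[x,y,x]]) i
        = edelta m (covL [[x,y,x]]) x + edelta m (covL [[x,y,x]]) y :=
      Finset.sum_pair hne
    have hsum2 : ∑ i ∈ ({x, y} : Finset V), a i = a x + a y := Finset.sum_pair hne
    have hev : evCnt [[x, y, x]] = 1 := by
      simp only [evCnt, List.filter, List.length_cons, List.length_nil]
      rfl
    rw [hsum1, hsum2, hcard, hev]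
    omega

lemma sum_edelta_le {ears : List (List V)} {m : V → V → ℕ} {C' : List (Sym2 V)}
    (hsub : ∀ e ∈ covL ears, e ∈ C') (F : Finset V) :
    ∑ i ∈ F, edelta m C' i ≤ ∑ i ∈ F, edelta m (covL ears) i :=
  Finset.sum_le_sum fun i _ => edelta_anti hsub i

open Classical in
/-- One pass of the construction: either everything is covered, or we can append an ear. -/
lemma extend_full {G : SimpleGraph V} {a : V → ℕ} {c : V → Bool}
    (hc : ∀ ⦃u v⦄, G.Adj u v → c u ≠ c v)
    (hconn : G.Connected)
    {m : V → V → ℕ} (hm : AMat G a m)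
    (hcovm : ∀ ⦃u v⦄, G.Adj u v → ∃ m', AMat G a m' ∧ 1 ≤ m' u v) :
    ∀ (k : ℕ) (ears : List (List V)), GoodEars G ears → Budget a m ears →
      (Finset.univ.filter
        (fun e : Sym2 V => e ∈ G.edgeSet ∧ e ∉ covL ears)).card ≤ k →
      ∃ ears', GoodEars G ears' ∧ Budget a m ears' ∧ ∀ e ∈ G.edgeSet, e ∈ covL ears' := by
  classical
  intro k
  induction k with
  | zero =>
    intro ears hg hb hcard
    refine ⟨ears, hg, hb, ?_⟩
    intro e he
    by_contra hne
    have : e ∈ Finset.univ.filter (fun e : Sym2 V => e ∈ G.edgeSet ∧ e ∉ covL ears) := by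
      simp [he, hne]
    have := Finset.card_pos.mpr ⟨e, this⟩
    omega
  | succ k ih =>
    intro ears hg hb hcard
    by_cases hall : ∀ e ∈ G.edgeSet, e ∈ covL ears
    · exact ⟨ears, hg, hb, hall⟩
    · push_neg at hall
      obtain ⟨e₀, he₀, he₀'⟩ := hall
      -- find an uncovered edge with an endpoint in stV
      have hfind : ∃ u v, G.Adj u v ∧ s(u,v) ∉ covL ears ∧ u ∈ stV ears := by
        by_contra hno
        push_neg at hno
        have hclosed : ∀ u v, G.Adj u v → u ∈ stV ears → v ∈ stV ears := by
          intro u v hadj hu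
          by_cases hcv : s(u,v) ∈ covL ears
          · exact (covL_endpoint hcv).2
          · exact absurd hu (hno u v hadj hcv)
        obtain ⟨L₀, hL₀⟩ := List.exists_mem_of_ne_nil _ hg.ne
        have hlen : 2 ≤ L₀.length := by
          rcases hg.shape L₀ hL₀ with h | h | h
          · exact h.1
          · have := h.1
            omega
          · obtain ⟨p, q, -, rfl⟩ := h
            simp
        obtain ⟨w₀, hw₀⟩ := List.exists_mem_of_ne_nil L₀ (by
          intro h; rw [h] at hlen; simp at hlen)
        have hw₀st : w₀ ∈ stV ears := mem_stV.mpr (List.mem_flatten.mpr ⟨L₀, hL₀, hw₀⟩)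
        have hwalk : ∀ (p q : V), G.Walk p q → p ∈ stV ears → q ∈ stV ears := by
          intro p q w
          induction w with
          | nil => exact id
          | cons h w ih' => intro hp; exact ih' (hclosed _ _ h hp)
        obtain ⟨⟨u, v⟩, rfl⟩ := Quot.exists_rep e₀
        have hadj : G.Adj u v := he₀
        have hu : u ∈ stV ears := hwalk w₀ u ((hconn.preconnected w₀ u).some) hw₀st
        exact hno u v hadj he₀' hu
      obtain ⟨u, v, hadj, huncov, hu⟩ := hfind
      have huflat : u ∈ ears.flatten := mem_stV.mp hu
      -- generic measure step
      have hmeasure : ∀ (L : List V), (∃ e', e' ∈ earEdgeSet L ∧ e' ∈ G.edgeSet ∧ e' ∉ covL ears) →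
          (Finset.univ.filter
            (fun e : Sym2 V => e ∈ G.edgeSet ∧ e ∉ covL (ears ++ [L]))).card ≤ k := by
        rintro L ⟨e', he'E, he'G, he'unc⟩
        have hss : Finset.univ.filter
              (fun e : Sym2 V => e ∈ G.edgeSet ∧ e ∉ covL (ears ++ [L])) ⊂
            Finset.univ.filter (fun e : Sym2 V => e ∈ G.edgeSet ∧ e ∉ covL ears) := by
          constructor
          · intro e he
            simp only [Finset.mem_filter] at he ⊢
            refine ⟨he.1, he.2.1, fun hcv => he.2.2 ?_⟩
            rw [covL_append]
            exact List.mem_append_left _ hcv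
          · intro hsub
            have : e' ∈ Finset.univ.filter
                (fun e : Sym2 V => e ∈ G.edgeSet ∧ e ∉ covL ears) := by
              simp [he'G, he'unc]
            have h2 := hsub this
            simp only [Finset.mem_filter] at h2
            apply h2.2.2
            rw [covL_append]
            exact List.mem_append_right _ (mem_earEdges.mpr he'E)
        have := Finset.card_lt_card hss
        omega
      by_cases hv : v ∈ stV ears
      · -- single-edge ear inside S
        have hg' : GoodEars G (ears ++ [[u, v]]) := by
          refine hg.append ?_ ?_ ?_ ?_ ?_ ?_
          · exact List.isChain_cons_cons.mpr ⟨hadj, List.isChain_singleton _⟩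
          · exact Or.inl ⟨by simp, by simp [hadj.ne]⟩
          · intro x hx
            simp only [List.head?_cons, Option.mem_some_iff] at hx
            rw [← hx]; exact huflat
          · intro x hx
            simp only [List.getLast?_cons_cons, List.getLast?_singleton,
              Option.mem_some_iff] at hx
            rw [← hx]; exact mem_stV.mp hv
          · intro x hx
            simp at hx
          · intro e he
            rw [earEdgeSet_pair] at he
            rw [Set.mem_singleton_iff.mp he]
            exact huncov
        have hb' : Budget a m (ears ++ [[u, v]]) := by
          have hst : stV (ears ++ [[u, v]]) = stV ears := by
            rw [stV_append]
            apply Finset.union_eq_left.mpr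
            intro x hx
            simp only [List.toFinset_cons, List.toFinset_nil, LawfulSingleton.insert_empty_eq,
              Finset.mem_insert, Finset.mem_singleton] at hx
            rcases hx with rfl | rfl
            · exact hu
            · exact hv
          have hev : evCnt (ears ++ [[u, v]]) = evCnt ears := by
            rw [evCnt_append]
            simp
          have hsub : ∀ e ∈ covL ears, e ∈ covL (ears ++ [[u,v]]) := by
            intro e he; rw [covL_append]; exact List.mem_append_left _ he
          have hsum := sum_edelta_le (m := m) hsub (stV ears)
          rw [Budget, hst, hev]
          have hbold := hb
          rw [Budget] at hbold
          omega
        exact ih (ears ++ [[u, v]]) hg' hb'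
          (hmeasure _ ⟨s(u,v), by rw [earEdgeSet_pair]; rfl, G.mem_edgeSet.mpr hadj, huncov⟩)
      · by_cases hmuv : 1 ≤ m u v
        · -- two-cycle ear
          have hunc2 : ∀ e ∈ earEdgeSet [u, v, u], e ∉ covL ears := by
            intro e he
            rw [earEdgeSet_two_cycle] at he
            rw [Set.mem_singleton_iff.mp he]
            exact huncov
          have hg' : GoodEars G (ears ++ [[u, v, u]]) := by
            refine hg.append ?_ ?_ ?_ ?_ ?_ hunc2
            · exact List.isChain_cons_cons.mpr ⟨hadj,
                List.isChain_cons_cons.mpr ⟨hadj.symm, List.isChain_singleton _⟩⟩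
            · exact Or.inr (Or.inr ⟨u, v, hadj.ne, rfl⟩)
            · intro x hx
              simp only [List.head?_cons, Option.mem_some_iff] at hx
              rw [← hx]; exact huflat
            · intro x hx
              simp only [List.getLast?_cons_cons, List.getLast?_singleton,
                Option.mem_some_iff] at hx
              rw [← hx]; exact huflat
            · intro x hx
              rw [show ([u, v, u] : List V).tail.dropLast = [v] from rfl,
                List.mem_singleton] at hx
              rw [hx]
              exact fun hmem => hv (mem_stV.mpr hmem)
          have hb' : Budget a m (ears ++ [[u, v, u]]) := by
            have hst : stV (ears ++ [[u, v, u]]) = insert v (stV ears) := by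
              rw [stV_append]
              apply Finset.Subset.antisymm
              · apply Finset.union_subset
                · exact fun x hx => Finset.mem_insert_of_mem hx
                · intro x hx
                  rw [List.mem_toFinset] at hx
                  rcases List.mem_cons.mp hx with rfl | hx
                  · exact Finset.mem_insert_of_mem hu
                  · rcases List.mem_cons.mp hx with rfl | hx
                    · exact Finset.mem_insert_self _ _
                    · rcases List.mem_cons.mp hx with rfl | hx
                      · exact Finset.mem_insert_of_mem hu
                      · simp at hx
              · apply Finset.insert_subset
                · apply Finset.mem_union_right
                  rw [List.mem_toFinset]
                  exact List.mem_cons_of_mem _ (List.mem_cons_self)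
                · exact Finset.subset_union_left
            have hev : evCnt (ears ++ [[u, v, u]]) = evCnt ears + 1 := by
              rw [evCnt_append]
              simp
            have hsub : ∀ e ∈ covL ears, e ∈ covL (ears ++ [[u,v,u]]) := by
              intro e he; rw [covL_append]; exact List.mem_append_left _ he
            have hcovin : s(u,v) ∈ covL (ears ++ [[u,v,u]]) := by
              rw [covL_append]
              exact List.mem_append_right _ (mem_earEdges.mpr
                (by rw [earEdgeSet_two_cycle]; rfl))
            have hdropu : edelta m (covL (ears ++ [[u,v,u]])) u + m u v
                ≤ edelta m (covL ears) u := edelta_drop hsub huncov hcovin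
            have hfreshv : edelta m (covL (ears ++ [[u,v,u]])) v + 1 ≤ a v := by
              refine edelta_fresh ?_ (by rw [hm.1 v u]; exact hmuv) (hm.2.2 v)
              rw [Sym2.eq_swap]
              exact hcovin
            have hsum_erase := sum_edelta_le (m := m) hsub ((stV ears).erase u)
            have hsplit1 : edelta m (covL (ears ++ [[u,v,u]])) u
                  + ∑ i ∈ (stV ears).erase u, edelta m (covL (ears ++ [[u,v,u]])) i
                = ∑ i ∈ stV ears, edelta m (covL (ears ++ [[u,v,u]])) i :=
              Finset.add_sum_erase _ _ hu
            have hsplit2 : edelta m (covL ears) u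
                  + ∑ i ∈ (stV ears).erase u, edelta m (covL ears) i
                = ∑ i ∈ stV ears, edelta m (covL ears) i :=
              Finset.add_sum_erase _ _ hu
            rw [Budget, hst, hev, Finset.sum_insert hv, Finset.sum_insert hv,
              Finset.card_insert_of_notMem hv]
            have hbold := hb
            rw [Budget] at hbold
            omega
          exact ih (ears ++ [[u, v, u]]) hg' hb'
            (hmeasure _ ⟨s(u,v), by rw [earEdgeSet_two_cycle]; rfl,
              G.mem_edgeSet.mpr hadj, huncov⟩)
        · -- walk step
          have hmuv0 : m u v = 0 := by omega
          obtain ⟨m', hm', hm'uv⟩ := hcovm hadj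
          obtain ⟨ins, z, hzS, hinsS, hinsne, hNodup, hzins, hcyclen, hchainP, hcover, hpay⟩ :=
            exists_alt_path hc hm hm' (stV ears) hu hv hadj hmuv0 hm'uv
          set P : List V := u :: (ins ++ [z]) with hP_def
          have hPlen : P.length = ins.length + 2 := by simp [hP_def]
          have hP3 : 3 ≤ P.length := by
            rw [hPlen]
            have := List.length_pos_iff.mpr hinsne
            omega
          have hPtail : P.tail.dropLast = ins := by
            show (ins ++ [z]).dropLast = ins
            exact List.dropLast_concat
          have hintP : ∀ x ∈ P.tail.dropLast, x ∉ ears.flatten := by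
            rw [hPtail]
            intro x hx hmem
            exact hinsS x hx (mem_stV.mpr hmem)
          have huncP : ∀ e ∈ earEdgeSet P, e ∉ covL ears :=
            uncovered_of_interior hP3 (by
              rw [hPtail]
              intro x hx
              exact hinsS x hx)
          have hheadP : P.head? = some u := rfl
          have hlastP : P.getLast? = some z := by
            rw [hP_def, show u :: (ins ++ [z]) = (u :: ins) ++ [z] from rfl,
              List.getLast?_concat]
          have hshape : IsEarList P := by
            by_cases hzu : z = u
            · refine Or.inr (Or.inl ⟨?_, ?_, ?_⟩)
              · rw [hPlen]
                have := hcyclen hzu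
                omega
              · rw [hheadP, hlastP, hzu]
              · rw [hP_def, show u :: (ins ++ [z]) = (u :: ins) ++ [z] from rfl,
                  List.dropLast_concat]
                exact hNodup
            · refine Or.inl ⟨by rw [hPlen]; omega, ?_⟩
              rw [hP_def, show u :: (ins ++ [z]) = (u :: ins) ++ [z] from rfl]
              rw [List.nodup_append]
              refine ⟨hNodup, List.nodup_singleton _, ?_⟩
              intro x hx y hy
              rw [List.mem_singleton.mp hy]
              rintro rfl
              rcases List.mem_cons.mp hx with h | h
              · exact hzu h
              · exact hzins h
          have hg' : GoodEars G (ears ++ [P]) := by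
            refine hg.append hchainP hshape ?_ ?_ hintP huncP
            · intro x hx
              rw [hheadP] at hx
              simp only [Option.mem_some_iff] at hx
              rw [← hx]; exact huflat
            · intro x hx
              rw [hlastP] at hx
              simp only [Option.mem_some_iff] at hx
              rw [← hx]; exact mem_stV.mp hzS
          have hb' : Budget a m (ears ++ [P]) := by
            have hinsdisj : Disjoint (stV ears) ins.toFinset := by
              rw [Finset.disjoint_right]
              intro x hx
              rw [List.mem_toFinset] at hx
              exact hinsS x hx
            have hst : stV (ears ++ [P]) = stV ears ∪ ins.toFinset := by
              rw [stV_append]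
              apply Finset.Subset.antisymm
              · apply Finset.union_subset
                · exact Finset.subset_union_left
                · intro x hx
                  rw [List.mem_toFinset, hP_def] at hx
                  rcases List.mem_cons.mp hx with rfl | hx
                  · exact Finset.mem_union_left _ hu
                  · rcases List.mem_append.mp hx with hx | hx
                    · exact Finset.mem_union_right _ (List.mem_toFinset.mpr hx)
                    · rw [List.mem_singleton.mp hx]
                      exact Finset.mem_union_left _ hzS
              · apply Finset.union_subset
                · exact Finset.subset_union_left
                · intro x hx
                  apply Finset.mem_union_right
                  rw [List.mem_toFinset] at hx ⊢
                  rw [hP_def]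
                  exact List.mem_cons_of_mem _ (List.mem_append_left _ hx)
            have hsub : ∀ e ∈ covL ears, e ∈ covL (ears ++ [P]) := by
              intro e he; rw [covL_append]; exact List.mem_append_left _ he
            have hfresh : ∀ w ∈ ins.toFinset,
                edelta m (covL (ears ++ [P])) w + 1 ≤ a w := by
              intro w hw
              rw [List.mem_toFinset] at hw
              obtain ⟨u', he', hmw⟩ := hcover w hw
              refine edelta_fresh ?_ hmw (hm.2.2 w)
              rw [covL_append]
              exact List.mem_append_right _ he'
            have hfresh_sum : ∑ w ∈ ins.toFinset, edelta m (covL (ears ++ [P])) w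
                + ins.toFinset.card ≤ ∑ w ∈ ins.toFinset, a w := by
              have := Finset.sum_le_sum hfresh
              rw [Finset.sum_add_distrib, Finset.sum_const, smul_eq_mul, mul_one] at this
              omega
            have hcardins : ins.toFinset.card = ins.length :=
              List.toFinset_card_of_nodup (List.nodup_cons.mp hNodup).2
            have hev : evCnt (ears ++ [P]) = evCnt ears
                + (if ins.length % 2 = 1 then 1 else 0) := by
              rw [evCnt_append]
              congr 1
              rw [hPlen]
              by_cases h : ins.length % 2 = 1
              · rw [if_pos h, if_pos (by omega)]
              · rw [if_neg h, if_neg (by omega)]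
            rw [Budget, hst, Finset.sum_union hinsdisj, Finset.sum_union hinsdisj,
              Finset.card_union_of_disjoint hinsdisj, hev]
            have hbold := hb
            rw [Budget] at hbold
            by_cases hpar : ins.length % 2 = 1
            · -- even ear: payment at z
              obtain ⟨u', hu'S, he', hmu'⟩ := hpay hpar
              have hznot : s(z, u') ∉ covL ears := by
                intro hcv
                exact hu'S ((covL_endpoint hcv).2)
              have hzin : s(z, u') ∈ covL (ears ++ [P]) := by
                rw [covL_append, Sym2.eq_swap]
                exact List.mem_append_right _ he'
              have hdropz : edelta m (covL (ears ++ [P])) z + m z u'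
                  ≤ edelta m (covL ears) z := edelta_drop hsub hznot hzin
              have hmzu' : 1 ≤ m z u' := by rw [hm.1 z u']; exact hmu'
              have hzst : z ∈ stV ears := hzS
              have hsum_erase := sum_edelta_le (m := m) hsub ((stV ears).erase z)
              have hsplit1 : edelta m (covL (ears ++ [P])) z
                    + ∑ i ∈ (stV ears).erase z, edelta m (covL (ears ++ [P])) i
                  = ∑ i ∈ stV ears, edelta m (covL (ears ++ [P])) i :=
                Finset.add_sum_erase _ _ hzst
              have hsplit2 : edelta m (covL ears) z
                    + ∑ i ∈ (stV ears).erase z, edelta m (covL ears) i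
                  = ∑ i ∈ stV ears, edelta m (covL ears) i :=
                Finset.add_sum_erase _ _ hzst
              rw [if_pos hpar]
              omega
            · rw [if_neg hpar]
              have hsum := sum_edelta_le (m := m) hsub (stV ears)
              omega
          obtain ⟨w, ins', hins'⟩ := List.exists_cons_of_ne_nil hinsne
          have hpairuw : (u, w) ∈ P.zip P.tail := by
            rw [hP_def, hins']
            exact List.mem_cons_self
          have he'ES : s(u, w) ∈ earEdgeSet P := ⟨(u, w), hpairuw, rfl⟩
          have he'G : s(u, w) ∈ G.edgeSet :=
            G.mem_edgeSet.mpr (chain'_of_pair hchainP hpairuw)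
          exact ih (ears ++ [P]) hg' hb'
            (hmeasure _ ⟨s(u, w), he'ES, he'G, huncP _ he'ES⟩)

end MCPProof

namespace MCPProof

open Finset

lemma amat_of_pm {n : ℕ} (G : SimpleGraph (Fin n)) (a : Fin n → ℕ)
    (M : (parallelization G a).Subgraph) (hM : M.IsPerfectMatching) :
    ∃ m, AMat G a m ∧ ∀ u v : (Σ i : Fin n, Fin (a i)), M.Adj u v → 1 ≤ m u.1 v.1 := by
  classical
  have hmatch : ∀ x : (Σ i : Fin n, Fin (a i)), ∃! w, M.Adj x w := fun x => hM.1 (hM.2 x)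
  set m : Fin n → Fin n → ℕ := fun i j =>
    ∑ s : Fin (a i), ∑ t : Fin (a j), if M.Adj ⟨i, s⟩ ⟨j, t⟩ then 1 else 0 with hm_def
  have hsymm : ∀ i j, m i j = m j i := by
    intro i j
    rw [hm_def]
    simp only
    rw [Finset.sum_comm]
    refine Finset.sum_congr rfl fun t _ => Finset.sum_congr rfl fun s _ => ?_
    congr 1
    exact propext ⟨fun h => h.symm, fun h => h.symm⟩
  have hadj : ∀ i j, m i j ≠ 0 → G.Adj i j := by
    intro i j h
    by_contra hne
    apply h
    rw [hm_def]
    simp only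
    apply Finset.sum_eq_zero
    intro s _
    apply Finset.sum_eq_zero
    intro t _
    rw [if_neg]
    intro hM'
    exact hne (M.adj_sub hM')
  have hunique : ∀ (x : Σ i : Fin n, Fin (a i)),
      (∑ w : (Σ i : Fin n, Fin (a i)), if M.Adj x w then 1 else 0) = 1 := by
    intro x
    obtain ⟨w₀, hw₀, huniq⟩ := hmatch x
    have hfil : Finset.univ.filter (fun w => M.Adj x w) = {w₀} := by
      ext w
      simp only [Finset.mem_filter, Finset.mem_univ, true_and, Finset.mem_singleton]
      exact ⟨fun h => huniq w h, fun h => h ▸ hw₀⟩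
    rw [← Finset.card_filter, hfil, Finset.card_singleton]
  have hdeg : ∀ i, ∑ j, m i j = a i := by
    intro i
    rw [hm_def]
    simp only
    rw [Finset.sum_comm]
    have hkey : ∀ s : Fin (a i),
        (∑ j, ∑ t : Fin (a j), if M.Adj ⟨i,s⟩ ⟨j,t⟩ then 1 else 0) = 1 := by
      intro s
      have hu := hunique ⟨i, s⟩
      rw [← Finset.univ_sigma_univ, Finset.sum_sigma] at hu
      exact hu
    rw [Finset.sum_congr rfl fun s _ => hkey s, Finset.sum_const, smul_eq_mul, mul_one,
      Finset.card_univ, Fintype.card_fin]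
  refine ⟨m, ⟨hsymm, hadj, hdeg⟩, ?_⟩
  intro u v huv
  rw [hm_def]
  simp only
  have h1 : (1:ℕ) ≤ ∑ t : Fin (a v.1), if M.Adj ⟨u.1, u.2⟩ ⟨v.1, t⟩ then 1 else 0 := by
    have h' := Finset.single_le_sum
      (f := fun t : Fin (a v.1) => if M.Adj ⟨u.1, u.2⟩ ⟨v.1, t⟩ then (1:ℕ) else 0)
      (fun t _ => by positivity) (Finset.mem_univ v.2)
    rw [if_pos (show M.Adj ⟨u.1, u.2⟩ ⟨v.1, v.2⟩ from huv)] at h'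
    exact h'
  have h2 := Finset.single_le_sum
    (f := fun s : Fin (a u.1) =>
      ∑ t : Fin (a v.1), if M.Adj ⟨u.1, s⟩ ⟨v.1, t⟩ then (1:ℕ) else 0)
    (fun s _ => by positivity) (Finset.mem_univ u.2)
  omega

end MCPProof

/-- **Proposition.** If `G^a` is matching-covered with `supp(a) = V` for a connected bipartite
graph `G` on `n` vertices, then `|a| ≥ φ(G) + n − 1`. -/
theorem matchingCovered_parallelization_order {n : ℕ} (G : SimpleGraph (Fin n))
    (hconn : G.Connected) (hbip : IsBipartiteGraph G)
    (a : Fin n → ℕ) (ha : ∀ i, a i ≠ 0)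
    (hmc : IsMatchingCovered (parallelization G a)) :
    phiGraph G + n - 1 ≤ ∑ i, a i := by
  classical
  open MCPProof in
  obtain ⟨hHconn, hHedge, hHmc⟩ := hmc
  have hn : 0 < n := by
    obtain ⟨x⟩ := hconn.nonempty
    exact x.pos
  -- an edge of `G`
  obtain ⟨e₀, he₀⟩ := hHedge
  induction e₀ using Sym2.ind with
  | _ u₀ v₀ =>
  have hadj₀ : (parallelization G a).Adj u₀ v₀ := (SimpleGraph.mem_edgeSet _).mp he₀
  have hGadj₀ : G.Adj u₀.1 v₀.1 := hadj₀
  -- per-edge `a`-matchings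
  have hcovm : ∀ ⦃i j : Fin n⦄, G.Adj i j → ∃ m', AMat G a m' ∧ 1 ≤ m' i j := by
    intro i j hij
    have hai : 0 < a i := Nat.pos_of_ne_zero (ha i)
    have haj : 0 < a j := Nat.pos_of_ne_zero (ha j)
    have huv : (parallelization G a).Adj ⟨i, ⟨0, hai⟩⟩ ⟨j, ⟨0, haj⟩⟩ := hij
    obtain ⟨M, hM, heM⟩ := hHmc s(⟨i, ⟨0, hai⟩⟩, ⟨j, ⟨0, haj⟩⟩)
      ((SimpleGraph.mem_edgeSet _).mpr huv)
    obtain ⟨m, hm, hcov⟩ := amat_of_pm G a M hM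
    exact ⟨m, hm, hcov _ _ (SimpleGraph.Subgraph.mem_edgeSet.mp heM)⟩
  obtain ⟨m, hm, hm₀⟩ := hcovm hGadj₀
  -- a bipartition coloring
  obtain ⟨A, B, hall, hdisjAB, hadjAB⟩ := hbip
  set c : Fin n → Bool := fun v => if v ∈ A then true else false with hc_def
  have hc : ∀ ⦃u v : Fin n⦄, G.Adj u v → c u ≠ c v := by
    intro u v huvadj
    have hmem : ∀ w, ¬ (w ∈ A ∧ w ∈ B) := by
      intro w hw
      have : w ∈ A ∩ B := hw
      rw [hdisjAB] at this
      exact this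
    rcases hadjAB huvadj with ⟨hu, hv⟩ | ⟨hu, hv⟩
    · have hvA : v ∉ A := fun h => hmem v ⟨h, hv⟩
      simp [hc_def, hu, hvA]
    · have huA : u ∉ A := fun h => hmem u ⟨h, hu⟩
      simp [hc_def, huA, hv]
  -- run the construction
  obtain ⟨hg0, hb0⟩ := init_good hm hGadj₀ hm₀
  obtain ⟨ears, hg, hb, hcovered⟩ := extend_full hc hconn hm hcovm
    (Finset.univ : Finset (Sym2 (Fin n))).card [[u₀.1, v₀.1, u₀.1]] hg0 hb0
    (Finset.card_filter_le _ _)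
  -- assemble a generalized ear decomposition
  have hcover_iff : ∀ e, e ∈ G.edgeSet ↔ ∃ L ∈ ears, e ∈ earEdgeSet L := by
    intro e
    constructor
    · intro he
      exact mem_covL.mp (hcovered e he)
    · rintro ⟨L, hL, p, hp, rfl⟩
      exact (SimpleGraph.mem_edgeSet _).mpr (chain'_of_pair (hg.chain L hL) hp)
  set E : GenEarDecomp G :=
    ⟨ears, hg.ne, hg.chain, hg.shape, hg.first, hg.attE, hg.attI, hg.disj, hcover_iff⟩
    with hE_def
  have hphi : phiGraph G ≤ evCnt ears := Nat.sInf_le ⟨E, rfl⟩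
  -- final budget accounting
  have hstuniv : stV ears = Finset.univ := by
    apply Finset.eq_univ_of_forall
    intro v
    have hvw : ∃ w, G.Adj v w := by
      by_cases hv : v = u₀.1
      · exact ⟨v₀.1, hv ▸ hGadj₀⟩
      · obtain ⟨p⟩ := hconn.preconnected v u₀.1
        cases p with
        | nil => exact absurd rfl hv
        | cons h q => exact ⟨_, h⟩
    obtain ⟨w, hw⟩ := hvw
    exact (covL_endpoint (hcovered _ ((SimpleGraph.mem_edgeSet _).mpr hw))).1
  have hdelta0 : ∑ i ∈ stV ears, edelta m (covL ears) i = 0 :=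
    Finset.sum_eq_zero fun i _ =>
      edelta_zero hm.2.1 (fun i j hij => hcovered _ ((SimpleGraph.mem_edgeSet _).mpr hij)) i
  have hbfinal := hb
  rw [Budget, hdelta0, hstuniv, Finset.card_univ, Fintype.card_fin] at hbfinal
  have hsa : ∑ i ∈ (Finset.univ : Finset (Fin n)), a i = ∑ i, a i := rfl
  omega
end

section
/- Let G be a connected bipartite graph and let H be a connected spanning subgraph of G (i.e., H has the same vertex set as G). Then μ(G) ≤ μ(H) and s(G) ≤ s(H). -/
open MvPolynomial

lemma earEdgeSet_pair {V : Type} (x y : V) : earEdgeSet [x, y] = {s(x, y)} := by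
  ext e; simp [earEdgeSet]

lemma GenEarDecomp.edge_mem {V : Type} {H : SimpleGraph V} (E : GenEarDecomp H)
    {L : List V} (hL : L ∈ E.ears) {e : Sym2 V} (he : e ∈ earEdgeSet L) : e ∈ H.edgeSet :=
  (E.edges_cover e).2 ⟨L, hL, he⟩


lemma GenEarDecomp.vertex_mem_flatten {V : Type} {H : SimpleGraph V} (E : GenEarDecomp H)
    {v u : V} (h : H.Adj v u) : v ∈ E.ears.flatten := by
  obtain ⟨L, hL, q, hq, he⟩ := (E.edges_cover s(v, u)).1 h
  have h1 := (List.of_mem_zip hq).1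
  have h2 := List.mem_of_mem_tail (List.of_mem_zip hq).2
  rw [Sym2.eq_iff] at he
  rcases he with ⟨rfl, rfl⟩ | ⟨rfl, rfl⟩
  · exact List.mem_flatten.2 ⟨L, hL, h1⟩
  · exact List.mem_flatten.2 ⟨L, hL, h2⟩

lemma extend_decomp {V : Type} [Finite V] {G H : SimpleGraph V} (hsub : H ≤ G)
    (E : GenEarDecomp H) (hflat : ∀ v : V, v ∈ E.ears.flatten) :
    ∃ E' : GenEarDecomp G, evenEarCount E' = evenEarCount E := by
  classical
  have hfin : (G.edgeSet \ H.edgeSet).Finite := Set.toFinite _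
  set es : List (Sym2 V) := hfin.toFinset.toList with hes
  have hnodup : es.Nodup := Finset.nodup_toList _
  have hmem : ∀ e, e ∈ es ↔ e ∈ G.edgeSet ∧ e ∉ H.edgeSet := by
    intro e; rw [hes, Finset.mem_toList, Set.Finite.mem_toFinset]; rfl
  set toEar : Sym2 V → List V := fun e => [(Quot.out e).1, (Quot.out e).2] with htoEar
  have hearedge : ∀ e : Sym2 V, earEdgeSet (toEar e) = {e} := by
    intro e
    rw [htoEar]
    simp only [earEdgeSet_pair]
    congr 1
    exact Quot.out_eq e
  have hadj : ∀ e ∈ es, G.Adj (Quot.out e).1 (Quot.out e).2 := by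
    intro e he
    have : s((Quot.out e).1, (Quot.out e).2) ∈ G.edgeSet := by
      have : s((Quot.out e).1, (Quot.out e).2) = e := Quot.out_eq e
      rw [this]
      exact ((hmem e).1 he).1
    exact this
  set l2 : List (List V) := es.map toEar with hl2
  set m := E.ears.length with hm
  -- take of the appended list for small indices
  have htake : ∀ i : ℕ, i ≤ m → (E.ears ++ l2).take i = E.ears.take i := by
    intro i hi
    rw [List.take_append, Nat.sub_eq_zero_of_le hi, List.take_zero,
      List.append_nil]
  have hget_lt : ∀ (i : ℕ) (h : i < m) (h' : i < (E.ears ++ l2).length),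
      (E.ears ++ l2).get ⟨i, h'⟩ = E.ears.get ⟨i, h⟩ := by
    intro i h h'
    simp [List.getElem_append_left h]
  have hget_ge : ∀ (i : ℕ) (h' : i < (E.ears ++ l2).length), m ≤ i →
      ∃ (hie : i - m < es.length), (E.ears ++ l2).get ⟨i, h'⟩ = toEar (es.get ⟨i - m, hie⟩) := by
    intro i h' hge
    have hl : i - m < l2.length := by
      have h'' := h'
      rw [List.length_append] at h''
      omega
    have hie : i - m < es.length := by simpa [hl2] using hl
    refine ⟨hie, ?_⟩
    simp only [List.get_eq_getElem, Fin.val_mk]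
    rw [List.getElem_append_right (by omega)]
    simp [hl2]
    rfl
  refine ⟨⟨E.ears ++ l2, ?_, ?_, ?_, ?_, ?_, ?_, ?_, ?_⟩, ?_⟩
  · simp [E.ears_nonempty]
  · -- chain_adj
    intro L hL
    rcases List.mem_append.1 hL with h | h
    · exact (E.chain_adj L h).imp fun a b hab => hsub hab
    · obtain ⟨e, he, rfl⟩ := List.mem_map.1 h
      exact List.isChain_pair.2 (hadj e he)
  · -- shape
    intro L hL
    rcases List.mem_append.1 hL with h | h
    · exact E.shape L h
    · obtain ⟨e, he, rfl⟩ := List.mem_map.1 h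
      exact Or.inl ⟨by simp [htoEar], by simp [htoEar, (hadj e he).ne]⟩
  · -- first_cycle
    intro L hL
    apply E.first_cycle
    rwa [List.head?_append_of_ne_nil _ E.ears_nonempty] at hL
  · -- attach_ends
    intro i hi h1
    by_cases hlt : i < m
    · rw [htake i (le_of_lt hlt), hget_lt i hlt hi]
      exact E.attach_ends i hlt h1
    · push_neg at hlt
      obtain ⟨hie, hEq⟩ := hget_ge i hi hlt
      rw [hEq]
      constructor <;> intro x hx <;>
      · have : x ∈ E.ears.flatten := hflat x
        rw [List.take_append, List.take_of_length_le (by omega : E.ears.length ≤ i),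
          List.flatten_append]
        exact List.mem_append_left _ this
  · -- attach_inner
    intro i hi h1
    by_cases hlt : i < m
    · rw [htake i (le_of_lt hlt), hget_lt i hlt hi]
      exact E.attach_inner i hlt h1
    · push_neg at hlt
      obtain ⟨hie, hEq⟩ := hget_ge i hi hlt
      rw [hEq]
      simp [htoEar]
  · -- edges_disjoint
    intro i j hi hj hij
    by_cases hlti : i < m <;> by_cases hltj : j < m
    · rw [hget_lt i hlti hi, hget_lt j hltj hj]
      exact E.edges_disjoint i j hlti hltj hij
    · push_neg at hltj
      obtain ⟨hje, hEqj⟩ := hget_ge j hj hltj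
      rw [hget_lt i hlti hi, hEqj, hearedge]
      rw [Set.disjoint_singleton_right]
      intro hc
      exact ((hmem _).1 (es.get_mem _)).2
        (E.edge_mem (E.ears.get_mem _) hc)
    · push_neg at hlti
      obtain ⟨hie, hEqi⟩ := hget_ge i hi hlti
      rw [hget_lt j hltj hj, hEqi, hearedge]
      rw [Set.disjoint_singleton_left]
      intro hc
      exact ((hmem _).1 (es.get_mem _)).2
        (E.edge_mem (E.ears.get_mem _) hc)
    · push_neg at hlti hltj
      obtain ⟨hie, hEqi⟩ := hget_ge i hi hlti
      obtain ⟨hje, hEqj⟩ := hget_ge j hj hltj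
      rw [hEqi, hEqj, hearedge, hearedge, Set.disjoint_singleton]
      intro hc
      have h2 : i - m = j - m := by
        have h3 := (List.Nodup.get_inj_iff hnodup).1 hc
        exact congrArg Fin.val h3
      omega
  · -- edges_cover
    intro e
    constructor
    · intro he
      by_cases hH : e ∈ H.edgeSet
      · obtain ⟨L, hL, heL⟩ := (E.edges_cover e).1 hH
        exact ⟨L, List.mem_append_left _ hL, heL⟩
      · refine ⟨toEar e, List.mem_append_right _ ?_, ?_⟩
        · exact List.mem_map.2 ⟨e, (hmem e).2 ⟨he, hH⟩, rfl⟩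
        · rw [hearedge]; rfl
    · rintro ⟨L, hL, heL⟩
      rcases List.mem_append.1 hL with h | h
      · exact (SimpleGraph.edgeSet_mono hsub) (E.edge_mem h heL)
      · obtain ⟨e', he', rfl⟩ := List.mem_map.1 h
        rw [hearedge] at heL
        rw [Set.mem_singleton_iff] at heL
        rw [heL]
        exact ((hmem e').1 he').1
  · -- count
    unfold evenEarCount
    rw [List.filter_append]
    have : l2.filter (fun L => L.length % 2 == 1) = [] := by
      rw [List.filter_eq_nil_iff]
      intro L hL
      obtain ⟨e, he, rfl⟩ := List.mem_map.1 hL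
      simp [htoEar]
    rw [this, List.append_nil]
lemma earEdgeSet_twoCycle {V : Type} (p v : V) : earEdgeSet [p, v, p] = {s(p, v)} := by
  ext e
  constructor
  · rintro ⟨q, hq, rfl⟩
    simp at hq
    rcases hq with ⟨rfl, rfl⟩ | ⟨rfl, rfl⟩ <;> simp [Sym2.eq_swap]
  · rintro rfl
    exact ⟨(p, v), by simp, rfl⟩

lemma exists_closer {V : Type} {H : SimpleGraph V} (hH : H.Connected) {r v : V}
    (hne : v ≠ r) : ∃ u, H.Adj u v ∧ H.dist r u < H.dist r v := by
  obtain ⟨p, hp⟩ := (hH r v).exists_walk_length_eq_dist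
  have hpos : 0 < H.dist r v := hH.pos_dist_of_ne (Ne.symm hne)
  have hnotnil : ¬ p.reverse.Nil := by
    rw [SimpleGraph.Walk.nil_iff_length_eq, SimpleGraph.Walk.length_reverse, hp]
    omega
  obtain ⟨u, hadj, q, hq⟩ := SimpleGraph.Walk.not_nil_iff.1 hnotnil
  refine ⟨u, hadj.symm, ?_⟩
  have hql : q.length = H.dist r v - 1 := by
    have h2 := congrArg SimpleGraph.Walk.length hq
    rw [SimpleGraph.Walk.length_reverse, hp] at h2
    simp [SimpleGraph.Walk.length_cons] at h2
    omega
  have h3 := SimpleGraph.dist_le q.reverse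
  rw [SimpleGraph.Walk.length_reverse, hql] at h3
  omega

lemma decomp_nonempty {V : Type} [Finite V] [Nontrivial V] {H : SimpleGraph V}
    (hH : H.Connected) : Nonempty (GenEarDecomp H) := by
  classical
  have hft : Fintype V := Fintype.ofFinite V
  obtain ⟨r, w0, hrw⟩ := exists_pair_ne V
  set d : V → ℕ := fun v => H.dist r v with hd
  set l : List V := (Finset.univ.toList (α := V)).mergeSort (fun a b => Nat.ble (d a) (d b)) with hl
  have hperm := List.mergeSort_perm (Finset.univ.toList (α := V)) (fun a b => Nat.ble (d a) (d b))
  have hmem : ∀ v : V, v ∈ l := fun v => hperm.mem_iff.2 (by simp)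
  have hnodup : l.Nodup := hperm.nodup_iff.2 (Finset.nodup_toList _)
  set n := l.length with hn
  have hn2 : 2 ≤ n := by
    have h1 : n = Fintype.card V := by
      rw [hn, hl, hperm.length_eq, Finset.length_toList, Finset.card_univ]
    have h2 := Fintype.one_lt_card (α := V)
    omega
  have htrans : ∀ a b c : V, Nat.ble (d a) (d b) = true → Nat.ble (d b) (d c) = true →
      Nat.ble (d a) (d c) = true := by
    intro a b c hab hbc
    simp only [Nat.ble_eq] at *
    omega
  have htotal : ∀ a b : V, (Nat.ble (d a) (d b) || Nat.ble (d b) (d a)) = true := by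
    intro a b
    simp only [Bool.or_eq_true, Nat.ble_eq]
    omega
  have hsorted := List.pairwise_mergeSort htrans htotal (Finset.univ.toList (α := V))
  rw [← hl] at hsorted
  have hmono : ∀ i j : ℕ, ∀ (hj : j < n), i < j → d (l.getD i r) ≤ d (l.getD j r) := by
    intro i j hj hij
    have hi : i < n := lt_trans hij hj
    have h1 := List.pairwise_iff_get.1 hsorted ⟨i, hi⟩ ⟨j, hj⟩ hij
    rw [Nat.ble_eq] at h1
    rw [List.getD_eq_getElem l r hi, List.getD_eq_getElem l r hj]
    simpa [List.get_eq_getElem] using h1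
  have hinj : ∀ i j : ℕ, i < n → j < n → l.getD i r = l.getD j r → i = j := by
    intro i j hi hj h
    rw [List.getD_eq_getElem l r hi, List.getD_eq_getElem l r hj] at h
    exact (hnodup.getElem_inj_iff).1 h
  have key : ∀ i : ℕ, 1 ≤ i → i < n → ∃ j, j < i ∧ H.Adj (l.getD j r) (l.getD i r) := by
    intro i h1 hi
    set v := l.getD i r with hv
    have hvr : v ≠ r := by
      intro h
      have h0 : d (l.getD 0 r) ≤ d v := hmono 0 i hi h1
      rw [h] at h0
      have hdr : d r = 0 := SimpleGraph.dist_self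
      have h00 : d (l.getD 0 r) = 0 := by omega
      have hl0 : l.getD 0 r = r := by
        rcases SimpleGraph.dist_eq_zero_iff_eq_or_not_reachable.1 h00 with h' | h'
        · exact h'.symm
        · exact absurd (hH r _) h'
      have := hinj 0 i (by omega) hi ((hl0.trans h.symm).trans hv)
      omega
    obtain ⟨u, huv, hdu⟩ := exists_closer hH hvr
    obtain ⟨⟨j, hj⟩, hju⟩ := List.mem_iff_get.1 (hmem u)
    have hju' : l.getD j r = u := by
      rw [List.getD_eq_getElem l r hj]
      exact hju
    have hdu' : d u < d v := hdu
    refine ⟨j, ?_, by rw [hju']; exact huv⟩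
    by_contra hc
    push_neg at hc
    rcases Nat.lt_or_ge i j with h' | h'
    · have h4 := hmono i j hj h'
      rw [hju', ← hv] at h4
      omega
    · have : i = j := by omega
      subst this
      rw [hju'] at hv
      rw [hv] at hdu'
      omega
  have key' : ∀ i : ℕ, ∃ j, 1 ≤ i → i < n → j < i ∧ H.Adj (l.getD j r) (l.getD i r) := by
    intro i
    by_cases h : 1 ≤ i ∧ i < n
    · obtain ⟨j, hj⟩ := key i h.1 h.2
      exact ⟨j, fun _ _ => hj⟩
    · exact ⟨0, fun h1 h2 => absurd ⟨h1, h2⟩ h⟩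
  choose P hP using key'
  set pk : ℕ → V := fun k => l.getD (P (k+1)) r with hpk
  set vk : ℕ → V := fun k => l.getD (k+1) r with hvk
  set treeEar : ℕ → List V := fun k => [pk k, vk k, pk k] with htreeEar
  set l1 : List (List V) := (List.range (n-1)).map treeEar with hl1
  set T : SimpleGraph V := SimpleGraph.fromEdgeSet {e | ∃ k, k < n - 1 ∧ e = s(pk k, vk k)}
    with hT
  have hadjk : ∀ k, k < n-1 → H.Adj (pk k) (vk k) := fun k hk =>
    (hP (k+1) (by omega) (by omega)).2
  have hPlt : ∀ k, k < n-1 → P (k+1) < k+1 := fun k hk =>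
    (hP (k+1) (by omega) (by omega)).1
  have hnek : ∀ k, k < n-1 → pk k ≠ vk k := fun k hk => (hadjk k hk).ne
  have hTadj : ∀ k, k < n-1 → T.Adj (pk k) (vk k) := by
    intro k hk
    rw [hT, SimpleGraph.fromEdgeSet_adj]
    exact ⟨⟨k, hk, rfl⟩, hnek k hk⟩
  have hTle : T ≤ H := by
    intro a b hab
    rw [hT, SimpleGraph.fromEdgeSet_adj] at hab
    obtain ⟨⟨k, hk, he⟩, hne⟩ := hab
    rw [Sym2.eq_iff] at he
    rcases he with ⟨h1, h2⟩ | ⟨h1, h2⟩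
    · rw [h1, h2]; exact hadjk k hk
    · rw [h1, h2]; exact (hadjk k hk).symm
  have hlen1 : l1.length = n - 1 := by simp [hl1]
  have hget1 : ∀ (k : ℕ) (hk : k < l1.length), l1.get ⟨k, hk⟩ = treeEar k := by
    intro k hk
    have hk' : k < n - 1 := by rwa [hlen1] at hk
    simp [hl1, List.get_eq_getElem]
  have htake1 : ∀ k : ℕ, k ≤ n - 1 → l1.take k = (List.range k).map treeEar := by
    intro k hk
    rw [hl1, ← List.map_take, List.take_range]
    rw [inf_eq_left.mpr hk]
  have claimA : ∀ k, 1 ≤ k → ∀ j, j ≤ k → l.getD j r ∈ ((List.range k).map treeEar).flatten := by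
    intro k hk1 j hjk
    rcases Nat.eq_zero_or_pos j with rfl | hj1
    · have hP1 : P 1 = 0 := by
        have := (hP 1 (le_refl 1) (by omega)).1
        omega
      refine List.mem_flatten.2 ⟨treeEar 0, List.mem_map.2 ⟨0, List.mem_range.2 hk1, rfl⟩, ?_⟩
      have hpk0 : pk 0 = l.getD 0 r := by rw [hpk]; simp [hP1]
      rw [htreeEar]
      simp only []
      rw [hpk0]
      simp
    · refine List.mem_flatten.2 ⟨treeEar (j-1),
        List.mem_map.2 ⟨j-1, List.mem_range.2 (by omega), rfl⟩, ?_⟩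
      have hvj : vk (j-1) = l.getD j r := by
        rw [hvk]
        simp only []
        congr 1
        omega
      rw [htreeEar]
      simp only []
      rw [hvj]
      simp
  have claimB : ∀ k, k ≤ n - 1 → ∀ x ∈ ((List.range k).map treeEar).flatten,
      ∃ j, j ≤ k ∧ j < n ∧ x = l.getD j r := by
    intro k hk x hx
    obtain ⟨L, hL, hxL⟩ := List.mem_flatten.1 hx
    obtain ⟨k', hk', rfl⟩ := List.mem_map.1 hL
    rw [List.mem_range] at hk'
    have hk'n : k' < n - 1 := lt_of_lt_of_le hk' hk
    rw [htreeEar] at hxL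
    simp only [List.mem_cons, List.mem_singleton, List.not_mem_nil, or_false] at hxL
    have hPb := hPlt k' hk'n
    rcases hxL with h | h | h
    · exact ⟨P (k'+1), by omega, by omega, h⟩
    · exact ⟨k'+1, by omega, by omega, h⟩
    · exact ⟨P (k'+1), by omega, by omega, h⟩
  have hedge_ne : ∀ k k', k < n-1 → k' < n-1 → k ≠ k' →
      s(pk k, vk k) ≠ s(pk k', vk k') := by
    intro k k' hk hk' hne heq
    rw [Sym2.eq_iff] at heq
    have hPk := hPlt k hk
    have hPk' := hPlt k' hk'
    rcases heq with ⟨h1, h2⟩ | ⟨h1, h2⟩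
    · have := hinj (k+1) (k'+1) (by omega) (by omega) h2
      omega
    · have e1 := hinj (P (k+1)) (k'+1) (by omega) (by omega) h1
      have e2 := hinj (k+1) (P (k'+1)) (by omega) (by omega) h2
      omega
  have hflat1 : ∀ v : V, v ∈ l1.flatten := by
    intro v
    obtain ⟨⟨j, hj⟩, hjv⟩ := List.mem_iff_get.1 (hmem v)
    have hv : l.getD j r = v := by
      rw [List.getD_eq_getElem l r hj]
      exact hjv
    rw [hl1, ← hv]
    exact claimA (n-1) (by omega) j (by omega)
  have ET : ∃ E0 : GenEarDecomp T, E0.ears = l1 := by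
    refine ⟨⟨l1, ?_, ?_, ?_, ?_, ?_, ?_, ?_, ?_⟩, rfl⟩
    · intro h
      have := hlen1
      rw [h] at this
      simp at this
      omega
    · intro L hL
      obtain ⟨k, hk, rfl⟩ := List.mem_map.1 hL
      rw [List.mem_range] at hk
      rw [htreeEar]
      simp only []
      exact List.isChain_cons_cons.2 ⟨hTadj k hk, List.isChain_pair.2 (hTadj k hk).symm⟩
    · intro L hL
      obtain ⟨k, hk, rfl⟩ := List.mem_map.1 hL
      rw [List.mem_range] at hk
      exact Or.inr (Or.inr ⟨pk k, vk k, hnek k hk, by rw [htreeEar]⟩)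
    · intro L hL
      have hLmem := List.mem_of_mem_head? hL
      obtain ⟨k, hk, rfl⟩ := List.mem_map.1 hLmem
      rw [List.mem_range] at hk
      exact Or.inr ⟨pk k, vk k, hnek k hk, by rw [htreeEar]⟩
    · intro i hi h1
      rw [hget1 i hi]
      have hin : i < n - 1 := by rwa [hlen1] at hi
      have hgoal : pk i ∈ (l1.take i).flatten := by
        rw [htake1 i (by omega)]
        exact claimA i h1 (P (i+1)) (by have := hPlt i hin; omega)
      constructor
      · intro x hx
        rw [htreeEar] at hx
        simp only [List.head?_cons, Option.mem_def, Option.some.injEq] at hx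
        rw [← hx]
        exact hgoal
      · intro x hx
        rw [htreeEar] at hx
        simp only [Option.mem_def] at hx
        have hgl : ([pk i, vk i, pk i].getLast?) = some (pk i) := rfl
        rw [hgl] at hx
        rw [← Option.some.inj hx]
        exact hgoal
    · intro i hi h1 x hx
      rw [hget1 i hi, htreeEar] at hx
      simp at hx
      have hin : i < n - 1 := by rwa [hlen1] at hi
      rw [htake1 i (by omega)]
      intro hc
      obtain ⟨j, hjk, hjn, hxe⟩ := claimB i (by omega) x hc
      rw [hx] at hxe
      have hvi : vk i = l.getD (i+1) r := by rw [hvk]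
      rw [hvi] at hxe
      have := hinj (i+1) j (by omega) hjn hxe
      omega
    · intro i j hi hj hij
      rw [hget1 i hi, hget1 j hj, htreeEar]
      simp only []
      rw [earEdgeSet_twoCycle, earEdgeSet_twoCycle]
      rw [Set.disjoint_singleton]
      exact hedge_ne i j (by rwa [hlen1] at hi) (by rwa [hlen1] at hj) hij
    · intro e
      rw [hT, SimpleGraph.edgeSet_fromEdgeSet]
      constructor
      · rintro ⟨⟨k, hk, rfl⟩, hdiag⟩
        refine ⟨treeEar k, List.mem_map.2 ⟨k, List.mem_range.2 hk, rfl⟩, ?_⟩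
        rw [htreeEar]
        simp only []
        rw [earEdgeSet_twoCycle]
        rfl
      · rintro ⟨L, hL, heL⟩
        obtain ⟨k, hk, rfl⟩ := List.mem_map.1 hL
        rw [List.mem_range] at hk
        rw [htreeEar] at heL
        simp only [] at heL
        rw [earEdgeSet_twoCycle, Set.mem_singleton_iff] at heL
        subst heL
        have h1 : (s(pk k, vk k) : Sym2 V) ∈ {e : Sym2 V | ∃ k', k' < n - 1 ∧ e = s(pk k', vk k')} := ⟨k, hk, rfl⟩
        have h2 : ¬ (s(pk k, vk k) : Sym2 V).IsDiag := by
          simpa [Sym2.isDiag_iff_proj_eq] using hnek k hk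
        exact ⟨h1, h2⟩
  obtain ⟨E0, hE0⟩ := ET
  obtain ⟨E', -⟩ := extend_decomp hTle E0 (by rw [hE0]; exact hflat1)
  exact ⟨E'⟩

lemma decomp_vertex_all {V : Type} [Nontrivial V] {H : SimpleGraph V} (hH : H.Connected)
    (E : GenEarDecomp H) : ∀ v : V, v ∈ E.ears.flatten := by
  intro v
  obtain ⟨w, hw⟩ := exists_ne v
  obtain ⟨u, hu, -⟩ := exists_closer hH (Ne.symm hw)
  exact E.vertex_mem_flatten hu.symm

lemma graph_eq_of_subsingleton {V : Type} (hV : Subsingleton V) (G H : SimpleGraph V) :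
    G = H := by
  ext v w
  constructor <;> intro h <;> exact absurd (Subsingleton.elim v w) h.ne

lemma phi_mono {V : Type} [Finite V] {G H : SimpleGraph V} (hsub : H ≤ G)
    (hHconn : H.Connected) : phiGraph G ≤ phiGraph H := by
  rcases subsingleton_or_nontrivial V with hV | hV
  · rw [graph_eq_of_subsingleton hV G H]
  · obtain ⟨E⟩ := decomp_nonempty hHconn
    have hne : {m | ∃ E : GenEarDecomp H, evenEarCount E = m}.Nonempty := ⟨_, E, rfl⟩
    obtain ⟨E0, hE0⟩ := Nat.sInf_mem hne
    obtain ⟨E', hE'⟩ := extend_decomp hsub E0 (decomp_vertex_all hHconn E0)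
    calc phiGraph G ≤ evenEarCount E' := Nat.sInf_le ⟨E', rfl⟩
    _ = phiGraph H := by rw [hE', hE0]; rfl

lemma mu_mono {V : Type} [Finite V] {G H : SimpleGraph V} (hsub : H ≤ G)
    (hHconn : H.Connected) : muGraph G ≤ muGraph H :=
  Nat.div_le_div_right (Nat.sub_le_sub_right (Nat.add_le_add_right (phi_mono hsub hHconn) _) _)

lemma complete_bip_transfer {V : Type} (G H : SimpleGraph V) (hGbip : IsBipartiteGraph G)
    (hsub : H ≤ G) (hHconn : H.Connected) (hHc : IsCompleteBipartite H) :
    IsCompleteBipartite G := by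
  rcases subsingleton_or_nontrivial V with hV | hV
  · rw [graph_eq_of_subsingleton hV G H]; exact hHc
  · obtain ⟨A, B, ⟨hcov, hdis, hcross⟩, hcomp⟩ := hHc
    obtain ⟨A', B', hcov', hdis', hcross'⟩ := hGbip
    have hboth : ∀ x : V, x ∈ A' → x ∈ B' → False := by
      intro x h h'
      have : x ∈ A' ∩ B' := ⟨h, h'⟩
      rw [hdis'] at this
      exact this
    have hedge : ∃ x y, H.Adj x y := by
      obtain ⟨v, w, hvw⟩ := exists_pair_ne V
      obtain ⟨u, hu, -⟩ := exists_closer hHconn hvw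
      exact ⟨u, v, hu⟩
    have hA : A.Nonempty := by
      obtain ⟨x, y, hxy⟩ := hedge
      rcases hcross hxy with ⟨h1, h2⟩ | ⟨h1, h2⟩
      exacts [⟨x, h1⟩, ⟨y, h2⟩]
    have hB : B.Nonempty := by
      obtain ⟨x, y, hxy⟩ := hedge
      rcases hcross hxy with ⟨h1, h2⟩ | ⟨h1, h2⟩
      exacts [⟨y, h2⟩, ⟨x, h1⟩]
    have hsame : ∀ v w b : V, G.Adj v b → G.Adj w b → ¬ G.Adj v w := by
      intro v w b h1 h2 h3
      rcases hcross' h1 with ⟨hv, hb⟩ | ⟨hv, hb⟩ <;>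
        rcases hcross' h2 with ⟨hw, hb'⟩ | ⟨hw, hb'⟩ <;>
        rcases hcross' h3 with ⟨hv', hw'⟩ | ⟨hv', hw'⟩ <;>
        first
          | exact hboth b hb hb' | exact hboth b hb' hb
          | exact hboth v hv hv' | exact hboth v hv' hv
          | exact hboth w hw hw' | exact hboth w hw' hw
    have hGcross : ∀ ⦃v w : V⦄, G.Adj v w → (v ∈ A ∧ w ∈ B) ∨ (v ∈ B ∧ w ∈ A) := by
      intro v w hvw
      rcases hcov v with hv | hv <;> rcases hcov w with hw | hw
      · obtain ⟨b, hb⟩ := hB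
        exact absurd hvw (hsame v w b (hsub (hcomp v hv b hb)) (hsub (hcomp w hw b hb)))
      · exact Or.inl ⟨hv, hw⟩
      · exact Or.inr ⟨hv, hw⟩
      · obtain ⟨a, ha⟩ := hA
        exact absurd hvw (hsame v w a (hsub ((hcomp a ha v hv).symm)) (hsub ((hcomp a ha w hw).symm)))
    exact ⟨A, B, ⟨hcov, hdis, hGcross⟩, fun a ha b hb => hsub (hcomp a ha b hb)⟩

/-- **Lemma.** Let `G` be a connected bipartite graph and `H` a connected spanning subgraph of
`G`. Then `μ(G) ≤ μ(H)` and `s(G) ≤ s(H)`. -/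
theorem mu_s_spanning_subgraph {V : Type} [Fintype V] (G H : SimpleGraph V)
    (hGconn : G.Connected) (hGbip : IsBipartiteGraph G)
    (hsub : H ≤ G) (hHconn : H.Connected) :
    muGraph G ≤ muGraph H ∧ sBip G ≤ sBip H := by
  constructor
  · exact mu_mono hsub hHconn
  · classical
    by_cases hGc : IsCompleteBipartite G
    · simp only [sBip, if_pos hGc]
      exact Nat.zero_le _
    · have hHc : ¬ IsCompleteBipartite H := fun h =>
        hGc (complete_bip_transfer G H hGbip hsub hHconn h)
      simp only [sBip, if_neg hGc, if_neg hHc]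
      have hSH : {m | ∃ U : Set V, IsDominatingSet H U ∧ (H.induce U).Connected ∧
          muGraph (H.induce U) = m}.Nonempty := by
        refine ⟨muGraph (H.induce Set.univ), Set.univ, ?_, ?_, rfl⟩
        · intro v hv
          exact absurd (Set.mem_univ v) hv
        · exact (SimpleGraph.Iso.connected_iff (SimpleGraph.induceUnivIso H)).2 hHconn
      obtain ⟨U, hdom, hconn, hmu⟩ := Nat.sInf_mem hSH
      have hsub' : H.induce U ≤ G.induce U := fun a b h => hsub h
      have hdomG : IsDominatingSet G U := by
        intro v hv
        obtain ⟨u, hu, ha⟩ := hdom v hv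
        exact ⟨u, hu, hsub ha⟩
      have hconnG : (G.induce U).Connected := hconn.mono hsub'
      calc sInf {m | ∃ U : Set V, IsDominatingSet G U ∧ (G.induce U).Connected ∧
              muGraph (G.induce U) = m}
          ≤ muGraph (G.induce U) := Nat.sInf_le ⟨U, hdomG, hconnG, rfl⟩
        _ ≤ muGraph (H.induce U) := mu_mono hsub' hconn
        _ = _ := hmu
end
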